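/- arXiv:2602.06754 — 10 statements merged into one kernel-verified Lean document; each statement's English description precedes it below -/
import Mathlib

section
/- Let Σ be a nonempty finite set, let p ∈ Δ(Σ) have full support, and let g : Σ → ℝ be non-constant. For δ ≥ 0 define q_δ(u) = p_u e^{δ g_u} / Z(δ) with Z(δ) = Σ_{v∈Σ} p_v e^{δ g_v}, let M(g) = argmax_{u∈Σ} g_u and ε_max(g) = −log(Σ_{u∈M(g)} p_u). If 0 < ε < ε_max(g), then there exists a unique δ ∈ (0,∞) such that KL(q_δ ‖ p) = ε, and q_δ is the unique maximizer of the linear functional q ↦ Σ_{u∈Σ} g_u q_u over the set {q ∈ Δ(Σ) : KL(q ‖ p) ≤ ε}. -/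
open Finset

/-- The probability simplex on a finite type `V`. -/
def simplex (V : Type*) [Fintype V] : Set (V → ℝ) :=
  {q | (∀ u, 0 ≤ q u) ∧ ∑ u, q u = 1}

/-- KL divergence `KL(q ‖ p) = ∑ u, q u * log (q u / p u)`
(the convention `0 · log 0 = 0` holds automatically). -/
noncomputable def KL {V : Type*} [Fintype V] (q p : V → ℝ) : ℝ :=
  ∑ u, q u * Real.log (q u / p u)

/-- The exponentially tilted distribution `q_δ(u) = p_u e^{δ g_u} / Z(δ)`. -/
noncomputable def qExp {V : Type*} [Fintype V] (p g : V → ℝ) (δ : ℝ) : V → ℝ :=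
  fun u => p u * Real.exp (δ * g u) / ∑ v, p v * Real.exp (δ * g v)

section Aux

variable {V : Type*} [Fintype V] [Nonempty V]

lemma Zpos (p g : V → ℝ) (hppos : ∀ u, 0 < p u) (δ : ℝ) :
    0 < ∑ v, p v * Real.exp (δ * g v) :=
  Finset.sum_pos (fun v _ => mul_pos (hppos v) (Real.exp_pos _)) Finset.univ_nonempty

lemma qExp_pos (p g : V → ℝ) (hppos : ∀ u, 0 < p u) (δ : ℝ) (u : V) :
    0 < qExp p g δ u :=
  div_pos (mul_pos (hppos u) (Real.exp_pos _)) (Zpos p g hppos δ)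

lemma qExp_sum (p g : V → ℝ) (hppos : ∀ u, 0 < p u) (δ : ℝ) :
    ∑ u, qExp p g δ u = 1 := by
  unfold qExp
  rw [← Finset.sum_div]
  exact div_self (Zpos p g hppos δ).ne'

lemma log_qExp (p g : V → ℝ) (hppos : ∀ u, 0 < p u) (δ : ℝ) (u : V) :
    Real.log (qExp p g δ u)
      = Real.log (p u) + δ * g u - Real.log (∑ v, p v * Real.exp (δ * g v)) := by
  unfold qExp
  rw [Real.log_div (mul_pos (hppos u) (Real.exp_pos _)).ne' (Zpos p g hppos δ).ne',
    Real.log_mul (hppos u).ne' (Real.exp_pos _).ne', Real.log_exp]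

lemma KL_self (r : V → ℝ) (hr : ∀ u, 0 < r u) : KL r r = 0 := by
  unfold KL
  apply Finset.sum_eq_zero
  intro u _
  rw [div_self (hr u).ne', Real.log_one, mul_zero]

lemma ident (p g : V → ℝ) (hppos : ∀ u, 0 < p u) (δ : ℝ)
    (q : V → ℝ) (hq0 : ∀ u, 0 ≤ q u) (hq1 : ∑ u, q u = 1) :
    KL q p - KL q (qExp p g δ) =
      δ * ∑ u, g u * q u - Real.log (∑ v, p v * Real.exp (δ * g v)) := by
  unfold KL
  rw [← Finset.sum_sub_distrib]
  have hterm : ∀ u : V, q u * Real.log (q u / p u) - q u * Real.log (q u / qExp p g δ u)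
      = δ * (g u * q u) - q u * Real.log (∑ v, p v * Real.exp (δ * g v)) := by
    intro u
    rcases (hq0 u).eq_or_lt with h | h
    · simp [← h]
    · have hqd := qExp_pos p g hppos δ u
      rw [Real.log_div h.ne' (hppos u).ne', Real.log_div h.ne' hqd.ne',
        log_qExp p g hppos δ u]
      ring
  rw [Finset.sum_congr rfl (fun u _ => hterm u), Finset.sum_sub_distrib, ← Finset.mul_sum,
    ← Finset.sum_mul, hq1, one_mul]

lemma gibbs (q r : V → ℝ) (hq0 : ∀ u, 0 ≤ q u) (hq1 : ∑ u, q u = 1)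
    (hr0 : ∀ u, 0 < r u) (hr1 : ∑ u, r u = 1) :
    0 ≤ KL q r ∧ (KL q r = 0 → q = r) := by
  have key : ∀ u : V, q u - r u ≤ q u * Real.log (q u / r u) := by
    intro u
    rcases (hq0 u).eq_or_lt with h | h
    · simp [← h]; exact (hr0 u).le
    · have hx : 0 < r u / q u := div_pos (hr0 u) h
      have hlog : Real.log (q u / r u) = - Real.log (r u / q u) := by
        rw [← Real.log_inv, inv_div]
      have h2 := mul_le_mul_of_nonneg_left (Real.log_le_sub_one_of_pos hx) h.le
      have he : q u * (r u / q u) = r u := by field_simp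
      rw [mul_sub, he, mul_one] at h2
      rw [hlog]
      linarith
  have hge : ∑ u, (q u - r u) ≤ KL q r := by
    unfold KL; exact Finset.sum_le_sum (fun u _ => key u)
  rw [Finset.sum_sub_distrib, hq1, hr1, sub_self] at hge
  refine ⟨hge, fun h0 => ?_⟩
  unfold KL at h0
  have hsum : ∑ u, (q u * Real.log (q u / r u) - (q u - r u)) = 0 := by
    rw [Finset.sum_sub_distrib, h0, Finset.sum_sub_distrib, hq1, hr1]
    ring
  have hz := (Finset.sum_eq_zero_iff_of_nonneg
    (fun u _ => by linarith [key u])).mp hsum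
  funext u
  have hzu := hz u (Finset.mem_univ u)
  rcases (hq0 u).eq_or_lt with h | h
  · exfalso
    rw [← h] at hzu
    simp at hzu
    linarith [hr0 u, hzu]
  · by_contra hne
    have hx : 0 < r u / q u := div_pos (hr0 u) h
    have hx1 : r u / q u ≠ 1 := by
      intro hc
      exact hne ((div_eq_one_iff_eq h.ne').mp hc).symm
    have hstrict := Real.log_lt_sub_one_of_pos hx hx1
    have h2 := mul_lt_mul_of_pos_left hstrict h
    have he : q u * (r u / q u) = r u := by field_simp
    rw [mul_sub, he, mul_one] at h2
    have hlog : Real.log (q u / r u) = - Real.log (r u / q u) := by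
      rw [← Real.log_inv, inv_div]
    rw [hlog] at hzu
    nlinarith [hzu, h2]

/-- For c < 0, δ * exp (δ * c) → 0. -/
lemma tendsto_mul_exp (c : ℝ) (hc : c < 0) :
    Filter.Tendsto (fun δ : ℝ => δ * Real.exp (δ * c)) Filter.atTop (nhds 0) := by
  have h1 : Filter.Tendsto (fun x : ℝ => x ^ 1 * Real.exp (-x)) Filter.atTop (nhds 0) :=
    Real.tendsto_pow_mul_exp_neg_atTop_nhds_zero 1
  have h2 : Filter.Tendsto (fun δ : ℝ => (-c) * δ) Filter.atTop Filter.atTop :=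
    Filter.Tendsto.const_mul_atTop (by linarith) Filter.tendsto_id
  have h3 := (h1.comp h2).const_mul (-1/c)
  rw [mul_zero] at h3
  refine h3.congr (fun δ => ?_)
  simp only [Function.comp_apply, pow_one]
  have hcne : c ≠ 0 := ne_of_lt hc
  have h4 : -(-c * δ) = δ * c := by ring
  rw [h4, show -1 / c * (-c * δ * Real.exp (δ * c)) = c / c * (δ * Real.exp (δ * c)) from by
    ring, div_self hcne, one_mul]

lemma KL_qExp (p g : V → ℝ) (hppos : ∀ u, 0 < p u) (δ : ℝ) :
    KL (qExp p g δ) p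
      = δ * (∑ u, g u * qExp p g δ u) - Real.log (∑ v, p v * Real.exp (δ * g v)) := by
  have h := ident p g hppos δ (qExp p g δ) (fun u => (qExp_pos p g hppos δ u).le)
    (qExp_sum p g hppos δ)
  rwa [KL_self _ (qExp_pos p g hppos δ), sub_zero] at h

lemma cont_KL_qExp (p g : V → ℝ) (hppos : ∀ u, 0 < p u) :
    Continuous (fun δ : ℝ => KL (qExp p g δ) p) := by
  have hZ : Continuous (fun δ : ℝ => ∑ v, p v * Real.exp (δ * g v)) := by
    apply continuous_finset_sum
    intro v _
    exact continuous_const.mul (Real.continuous_exp.comp (continuous_id.mul continuous_const))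
  have hZne : ∀ δ : ℝ, (∑ v, p v * Real.exp (δ * g v)) ≠ 0 := fun δ => (Zpos p g hppos δ).ne'
  have hA : Continuous (fun δ : ℝ => ∑ u, g u * qExp p g δ u) := by
    apply continuous_finset_sum
    intro u _
    exact continuous_const.mul
      ((continuous_const.mul (Real.continuous_exp.comp (continuous_id.mul continuous_const))).div
        hZ hZne)
  exact ((continuous_id.mul hA).sub (hZ.log hZne)).congr
    (fun δ => (KL_qExp p g hppos δ).symm)

lemma tendsto_KL_qExp (p g : V → ℝ) (hppos : ∀ u, 0 < p u) (u0 : V) (hmax : ∀ v, g v ≤ g u0) :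
    Filter.Tendsto (fun δ : ℝ => KL (qExp p g δ) p) Filter.atTop
      (nhds (- Real.log (∑ u ∈ Finset.univ.filter (fun u => ∀ v, g v ≤ g u), p u))) := by
  set m := g u0 with hm
  have hSpos : ∀ δ : ℝ, 0 < ∑ v, p v * Real.exp (δ * (g v - m)) :=
    fun δ => Zpos p (fun v => g v - m) hppos δ
  set PM : ℝ := ∑ u ∈ Finset.univ.filter (fun u => ∀ v, g v ≤ g u), p u with hPMdef
  have hPM : 0 < PM :=
    Finset.sum_pos (fun i _ => hppos i)
      ⟨u0, Finset.mem_filter.mpr ⟨Finset.mem_univ _, hmax⟩⟩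
  have hZS : ∀ δ : ℝ, (∑ v, p v * Real.exp (δ * g v))
      = Real.exp (δ * m) * ∑ v, p v * Real.exp (δ * (g v - m)) := by
    intro δ
    rw [Finset.mul_sum]
    refine Finset.sum_congr rfl (fun v _ => ?_)
    rw [show δ * g v = δ * m + δ * (g v - m) from by ring, Real.exp_add]
    ring
  have hq' : ∀ (δ : ℝ) (u : V), qExp p g δ u
      = p u * Real.exp (δ * (g u - m)) / ∑ v, p v * Real.exp (δ * (g v - m)) := by
    intro δ u
    show p u * Real.exp (δ * g u) / (∑ v, p v * Real.exp (δ * g v)) = _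
    rw [hZS δ, show δ * g u = δ * m + δ * (g u - m) from by ring, Real.exp_add,
      show p u * (Real.exp (δ * m) * Real.exp (δ * (g u - m)))
        = Real.exp (δ * m) * (p u * Real.exp (δ * (g u - m))) from by ring,
      mul_div_mul_left _ _ (Real.exp_ne_zero _)]
  have hfS : ∀ δ : ℝ, KL (qExp p g δ) p
      = (∑ u, δ * (g u - m) * (p u * Real.exp (δ * (g u - m))))
          / (∑ v, p v * Real.exp (δ * (g v - m)))
        - Real.log (∑ v, p v * Real.exp (δ * (g v - m))) := by
    intro δ
    rw [KL_qExp p g hppos δ, hZS δ,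
      Real.log_mul (Real.exp_ne_zero _) (hSpos δ).ne', Real.log_exp]
    have hA : (∑ u, g u * qExp p g δ u)
        = (∑ u, g u * (p u * Real.exp (δ * (g u - m))))
          / ∑ v, p v * Real.exp (δ * (g v - m)) := by
      rw [Finset.sum_div]
      refine Finset.sum_congr rfl (fun u _ => ?_)
      rw [hq' δ u]
      ring
    have hN : (∑ u, δ * (g u - m) * (p u * Real.exp (δ * (g u - m))))
        = δ * (∑ u, g u * (p u * Real.exp (δ * (g u - m))))
          - δ * m * ∑ v, p v * Real.exp (δ * (g v - m)) := by
      rw [Finset.mul_sum, Finset.mul_sum, ← Finset.sum_sub_distrib]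
      exact Finset.sum_congr rfl (fun u _ => by ring)
    rw [hA, hN]
    have hSne := (hSpos δ).ne'
    field_simp
    ring
  have hStend : Filter.Tendsto (fun δ : ℝ => ∑ v, p v * Real.exp (δ * (g v - m)))
      Filter.atTop (nhds PM) := by
    have hPMeq : PM = ∑ v, (if ∀ w, g w ≤ g v then p v else 0) := by
      rw [hPMdef, Finset.sum_filter]
    rw [hPMeq]
    apply tendsto_finset_sum
    intro v _
    by_cases hv : ∀ w, g w ≤ g v
    · rw [if_pos hv]
      have hgv : g v - m = 0 := by
        have h1 : g v = m := le_antisymm (hmax v) (hv u0)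
        rw [h1, sub_self]
      simp only [hgv, mul_zero, Real.exp_zero, mul_one]
      exact tendsto_const_nhds
    · rw [if_neg hv]
      push_neg at hv
      obtain ⟨w, hw⟩ := hv
      have hc : g v - m < 0 := by
        have := hmax w
        simp only [hm] at this ⊢
        linarith
      have hexp : Filter.Tendsto (fun δ : ℝ => Real.exp (δ * (g v - m)))
          Filter.atTop (nhds 0) := by
        apply Real.tendsto_exp_atBot.comp
        exact Filter.Tendsto.atTop_mul_const_of_neg hc Filter.tendsto_id
      simpa using hexp.const_mul (p v)
  have hNtend : Filter.Tendsto
      (fun δ : ℝ => ∑ u, δ * (g u - m) * (p u * Real.exp (δ * (g u - m))))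
      Filter.atTop (nhds 0) := by
    have h0 : (0:ℝ) = ∑ _u : V, (0:ℝ) := by simp
    rw [h0]
    apply tendsto_finset_sum
    intro u _
    rcases (sub_nonpos.mpr (hmax u)).lt_or_eq with hc | hc
    · have h1 := (tendsto_mul_exp _ hc).const_mul ((g u - m) * p u)
      rw [mul_zero] at h1
      exact h1.congr (fun δ => by ring)
    · simp [hc]
  have hfin := (hNtend.div hStend hPM.ne').sub (hStend.log hPM.ne')
  rw [zero_div, zero_sub] at hfin
  exact Filter.Tendsto.congr (fun δ => (hfS δ).symm) hfin

end Aux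

theorem stmt_0 {V : Type*} [Fintype V] [Nonempty V]
    (p : V → ℝ) (hp : p ∈ simplex V) (hppos : ∀ u, 0 < p u)
    (g : V → ℝ) (hg : ∃ u v, g u ≠ g v)
    (ε : ℝ) (hε0 : 0 < ε)
    (hεmax : ε < - Real.log (∑ u ∈ Finset.univ.filter (fun u => ∀ v, g v ≤ g u), p u)) :
    ∃ δ : ℝ, 0 < δ ∧ KL (qExp p g δ) p = ε ∧
      (∀ δ' : ℝ, 0 < δ' → KL (qExp p g δ') p = ε → δ' = δ) ∧
      (∀ q ∈ simplex V, KL q p ≤ ε → ∑ u, g u * q u ≤ ∑ u, g u * qExp p g δ u) ∧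
      (∀ q ∈ simplex V, KL q p ≤ ε →
        ∑ u, g u * q u = ∑ u, g u * qExp p g δ u → q = qExp p g δ) := by
  obtain ⟨hp0, hp1⟩ := hp
  obtain ⟨u0, -, hmax'⟩ := Finset.exists_max_image Finset.univ g Finset.univ_nonempty
  have hmax : ∀ v, g v ≤ g u0 := fun v => hmax' v (Finset.mem_univ v)
  have hcont := cont_KL_qExp p g hppos
  have hf0 : KL (qExp p g 0) p = 0 := by
    rw [KL_qExp p g hppos 0]
    simp [hp1]
  have htend := tendsto_KL_qExp p g hppos u0 hmax
  have hev : ∀ᶠ δ in Filter.atTop, ε < KL (qExp p g δ) p :=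
    htend.eventually (eventually_gt_nhds hεmax)
  obtain ⟨T, hT⟩ := (hev.and (Filter.eventually_ge_atTop (0:ℝ))).exists
  have hIVT := intermediate_value_Icc hT.2 hcont.continuousOn
  obtain ⟨δ, hδmem, hδε⟩ := hIVT ⟨by rw [hf0]; exact hε0.le, hT.1.le⟩
  simp only at hδε
  have hδpos : 0 < δ := by
    rcases hδmem.1.eq_or_lt with h | h
    · exfalso
      rw [← h, hf0] at hδε
      exact hε0.ne hδε
    · exact h
  have hoptgen : ∀ d : ℝ, 0 < d → KL (qExp p g d) p = ε →
      ∀ q : V → ℝ, (∀ u, 0 ≤ q u) → (∑ u, q u = 1) → KL q p ≤ ε →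
        (∑ u, g u * q u ≤ ∑ u, g u * qExp p g d u ∧
          (∑ u, g u * q u = ∑ u, g u * qExp p g d u → q = qExp p g d)) := by
    intro d hd hKLd q hq0 hq1 hKLq
    have hI := ident p g hppos d q hq0 hq1
    have hId : d * (∑ u, g u * qExp p g d u)
        - Real.log (∑ v, p v * Real.exp (d * g v)) = ε := by
      rw [← KL_qExp p g hppos d]
      exact hKLd
    have hgib := gibbs q (qExp p g d) hq0 hq1 (qExp_pos p g hppos d) (qExp_sum p g hppos d)
    have hle : d * (∑ u, g u * q u) ≤ d * (∑ u, g u * qExp p g d u) := by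
      have h1 : d * (∑ u, g u * q u)
          - Real.log (∑ v, p v * Real.exp (d * g v)) ≤ ε := by
        rw [← hI]
        linarith [hgib.1, hKLq]
      linarith [h1, hId]
    refine ⟨le_of_mul_le_mul_left hle hd, fun heq => ?_⟩
    have h2 : KL q (qExp p g d) = 0 := by
      have h3 : d * (∑ u, g u * q u)
          - Real.log (∑ v, p v * Real.exp (d * g v)) = ε := by
        rw [heq]
        exact hId
      rw [← hI] at h3
      linarith [hgib.1, hKLq]
    exact hgib.2 h2
  have huniq : ∀ δ' : ℝ, 0 < δ' → KL (qExp p g δ') p = ε → δ' = δ := by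
    intro δ' hδ'pos hδ'ε
    have hA := (hoptgen δ hδpos hδε (qExp p g δ') (fun u => (qExp_pos p g hppos δ' u).le)
      (qExp_sum p g hppos δ') (le_of_eq hδ'ε)).1
    have hB := (hoptgen δ' hδ'pos hδ'ε (qExp p g δ) (fun u => (qExp_pos p g hppos δ u).le)
      (qExp_sum p g hppos δ) (le_of_eq hδε)).1
    have heqq : qExp p g δ' = qExp p g δ :=
      (hoptgen δ hδpos hδε (qExp p g δ') (fun u => (qExp_pos p g hppos δ' u).le)
        (qExp_sum p g hppos δ') (le_of_eq hδ'ε)).2 (le_antisymm hA hB)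
    obtain ⟨a, b, hab⟩ := hg
    have ha := congrArg Real.log (congrFun heqq a)
    have hb := congrArg Real.log (congrFun heqq b)
    rw [log_qExp p g hppos δ' a, log_qExp p g hppos δ a] at ha
    rw [log_qExp p g hppos δ' b, log_qExp p g hppos δ b] at hb
    have h3 : (δ' - δ) * (g a - g b) = 0 := by linear_combination ha - hb
    rcases mul_eq_zero.mp h3 with h | h
    · exact sub_eq_zero.mp h
    · exact absurd (sub_eq_zero.mp h) hab
  refine ⟨δ, hδpos, hδε, huniq, ?_, ?_⟩
  · intro q hq hKLq
    exact (hoptgen δ hδpos hδε q hq.1 hq.2 hKLq).1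
  · intro q hq hKLq heq
    exact (hoptgen δ hδpos hδε q hq.1 hq.2 hKLq).2 heq
end

section
/- Let Σ be a nonempty finite set, let p ∈ Δ(Σ) have full support, and let g : Σ → ℝ be non-constant. Let M(g) = argmax_{u∈Σ} g_u, ε_max(g) = −log(Σ_{u∈M(g)} p_u), and define q_∞ ∈ Δ(Σ) by q_∞(u) = p_u·1{u ∈ M(g)} / Σ_{v∈M(g)} p_v. If ε ≥ ε_max(g), then q_∞ maximizes the linear functional q ↦ Σ_{u∈Σ} g_u q_u over {q ∈ Δ(Σ) : KL(q ‖ p) ≤ ε}. -/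
open Finset

/-- The renormalized restriction of `p` to the argmax set of `g`:
`q_∞(u) = p_u · 1{u ∈ M(g)} / ∑_{v ∈ M(g)} p_v`. -/
noncomputable def qInf {V : Type*} [Fintype V] (p g : V → ℝ) : V → ℝ :=
  fun u => (if ∀ v, g v ≤ g u then p u else 0) /
    ∑ v ∈ Finset.univ.filter (fun w => ∀ x, g x ≤ g w), p v

theorem stmt_1 {V : Type*} [Fintype V] [Nonempty V]
    (p : V → ℝ) (hp : p ∈ simplex V) (hppos : ∀ u, 0 < p u)
    (g : V → ℝ) (hg : ∃ u v, g u ≠ g v)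
    (ε : ℝ)
    (hε : - Real.log (∑ u ∈ Finset.univ.filter (fun u => ∀ v, g v ≤ g u), p u) ≤ ε) :
    qInf p g ∈ simplex V ∧ KL (qInf p g) p ≤ ε ∧
      ∀ q ∈ simplex V, KL q p ≤ ε → ∑ u, g u * q u ≤ ∑ u, g u * qInf p g u := by
  classical
  obtain ⟨u0, hu0⟩ := Finite.exists_max g
  set M := Finset.univ.filter (fun w : V => ∀ x, g x ≤ g w) with hM
  have hu0M : u0 ∈ M := by simp [hM, hu0]
  set S := ∑ v ∈ M, p v with hSdef
  have hS : 0 < S := Finset.sum_pos (fun i _ => hppos i) ⟨u0, hu0M⟩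
  have hqdef : ∀ u, qInf p g u = (if u ∈ M then p u else 0) / S := by
    intro u; simp [qInf, hM, hSdef]
  have hsumif : ∑ u, (if u ∈ M then p u else 0) = S := by
    rw [Finset.sum_ite_mem, Finset.univ_inter]
  have hsum : ∑ u, qInf p g u = 1 := by
    simp only [hqdef]
    rw [← Finset.sum_div, hsumif, div_self hS.ne']
  have hmem : qInf p g ∈ simplex V := by
    refine ⟨fun u => ?_, hsum⟩
    rw [hqdef]
    have : (0:ℝ) ≤ if u ∈ M then p u else 0 := by
      split_ifs
      · exact (hppos u).le
      · exact le_refl 0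
    exact div_nonneg this hS.le
  refine ⟨hmem, ?_, ?_⟩
  · -- KL bound
    have hterm : ∀ u, qInf p g u * Real.log (qInf p g u / p u)
        = (if u ∈ M then p u else 0) / S * (-Real.log S) := by
      intro u
      rw [hqdef]
      by_cases h : u ∈ M
      · simp only [h, if_true]
        have hpu := hppos u
        have : p u / S / p u = S⁻¹ := by
          field_simp
        rw [this, Real.log_inv]
      · simp [h]
    have : KL (qInf p g) p = -Real.log S := by
      unfold KL
      rw [Finset.sum_congr rfl fun u _ => hterm u, ← Finset.sum_mul,
        ← Finset.sum_div, hsumif, div_self hS.ne', one_mul]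
    rw [this]
    exact hε
  · intro q hq _
    have hval : ∑ u, g u * qInf p g u = g u0 := by
      have : ∀ u, g u * qInf p g u = (if u ∈ M then p u else 0) / S * g u0 := by
        intro u
        rw [hqdef]
        by_cases h : u ∈ M
        · have hgu : g u = g u0 := le_antisymm (hu0 u)
            ((Finset.mem_filter.1 h).2 u0)
          simp [h, hgu, mul_comm]
        · simp [h]
      rw [Finset.sum_congr rfl fun u _ => this u, ← Finset.sum_mul,
        ← Finset.sum_div, hsumif, div_self hS.ne', one_mul]
    rw [hval]
    calc ∑ u, g u * q u ≤ ∑ u, g u0 * q u :=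
          Finset.sum_le_sum fun u _ => mul_le_mul_of_nonneg_right (hu0 u) (hq.1 u)
      _ = g u0 := by rw [← Finset.mul_sum, hq.2, mul_one]
end

section
/- Let Σ be a nonempty finite set, let p ∈ Δ(Σ) have full support, and let g : Σ → ℝ. For δ ≥ 0 define q_δ(u) = p_u e^{δ g_u} / Z(δ) with Z(δ) = Σ_{v∈Σ} p_v e^{δ g_v}, and let M(g) = argmax_{u∈Σ} g_u. Then as δ → ∞, q_δ converges to the distribution q_∞(u) = p_u·1{u ∈ M(g)} / Σ_{v∈M(g)} p_v, and lim_{δ→∞} KL(q_δ ‖ p) = −log(Σ_{u∈M(g)} p_u). -/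
open Finset

theorem stmt_3 {V : Type*} [Fintype V] [Nonempty V]
    (p : V → ℝ) (hp : p ∈ simplex V) (hppos : ∀ u, 0 < p u)
    (g : V → ℝ) :
    Filter.Tendsto (fun δ => qExp p g δ) Filter.atTop (nhds (qInf p g)) ∧
    Filter.Tendsto (fun δ => KL (qExp p g δ) p) Filter.atTop
      (nhds (- Real.log (∑ u ∈ Finset.univ.filter (fun u => ∀ v, g v ≤ g u), p u))) := by
  classical
  obtain ⟨u0, hu0⟩ := Finite.exists_max g
  set m := g u0 with hm
  set M : Finset V := Finset.univ.filter (fun u => ∀ v, g v ≤ g u) with hM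
  have hu0M : u0 ∈ M := by simp [hM]; exact hu0
  set c : ℝ := ∑ v ∈ M, p v with hc
  have hcpos : 0 < c := Finset.sum_pos (fun v _ => hppos v) ⟨u0, hu0M⟩
  set Zt : ℝ → ℝ := fun δ => ∑ v, p v * Real.exp (δ * (g v - m)) with hZt
  have hZpos : ∀ δ, 0 < Zt δ :=
    fun δ => Finset.sum_pos (fun v _ => mul_pos (hppos v) (Real.exp_pos _)) univ_nonempty
  have hiff : ∀ u, (∀ x, g x ≤ g u) ↔ g u = m := by
    intro u
    constructor
    · intro h; exact le_antisymm (hu0 u) (h u0)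
    · intro h x; rw [h]; exact hu0 x
  have hlt : ∀ u, ¬ (∀ x, g x ≤ g u) → g u - m < 0 := by
    intro u h
    have hne : g u ≠ m := fun he => h ((hiff u).mpr he)
    have : g u < m := lt_of_le_of_ne (hu0 u) hne
    linarith
  have hAtBot : ∀ u, ¬ (∀ x, g x ≤ g u) →
      Filter.Tendsto (fun δ : ℝ => δ * (g u - m)) Filter.atTop Filter.atBot :=
    fun u h => Filter.Tendsto.atTop_mul_const_of_neg (hlt u h) Filter.tendsto_id
  have hexp : ∀ u, Filter.Tendsto (fun δ => Real.exp (δ * (g u - m))) Filter.atTop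
      (nhds (if ∀ x, g x ≤ g u then 1 else 0)) := by
    intro u
    by_cases h : ∀ x, g x ≤ g u
    · have hg : g u - m = 0 := by rw [(hiff u).mp h]; ring
      simp [h, hg]
    · rw [if_neg h]
      exact Real.tendsto_exp_atBot.comp (hAtBot u h)
  have hZlim : Filter.Tendsto Zt Filter.atTop (nhds c) := by
    have hceq : c = ∑ v, (p v * if ∀ x, g x ≤ g v then 1 else 0) := by
      rw [hc, hM, Finset.sum_filter]
      refine Finset.sum_congr rfl fun v _ => ?_
      split <;> simp
    rw [hceq]
    exact tendsto_finset_sum _ (fun v _ => (tendsto_const_nhds.mul (hexp v)))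
  have hshift : ∀ δ u, qExp p g δ u = p u * Real.exp (δ * (g u - m)) / Zt δ := by
    intro δ u
    unfold qExp
    have hZ : (∑ v, p v * Real.exp (δ * g v)) = Zt δ * Real.exp (δ * m) := by
      rw [hZt, Finset.sum_mul]
      refine Finset.sum_congr rfl fun v _ => ?_
      rw [mul_assoc, ← Real.exp_add]
      ring_nf
    rw [hZ, show δ * g u = δ * (g u - m) + δ * m by ring, Real.exp_add, ← mul_assoc,
      mul_div_mul_right _ _ (Real.exp_ne_zero (δ * m))]
  constructor
  · rw [tendsto_pi_nhds]
    intro u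
    have h1 : Filter.Tendsto (fun δ => p u * Real.exp (δ * (g u - m)) / Zt δ)
        Filter.atTop (nhds (p u * (if ∀ x, g x ≤ g u then 1 else 0) / c)) :=
      (tendsto_const_nhds.mul (hexp u)).div hZlim hcpos.ne'
    have heq : qInf p g u = p u * (if ∀ x, g x ≤ g u then 1 else 0) / c := by
      unfold qInf
      rw [← hM, ← hc]
      split <;> simp
    rw [heq]
    exact h1.congr fun δ => (hshift δ u).symm
  · have hxex : Filter.Tendsto (fun x : ℝ => x * Real.exp x) Filter.atBot (nhds 0) := by
      have h1 := Real.tendsto_pow_mul_exp_neg_atTop_nhds_zero 1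
      simp only [pow_one] at h1
      have h2 := (h1.comp Filter.tendsto_neg_atBot_atTop).neg
      simp only [Function.comp_def] at h2
      convert h2 using 2 with x
      · ring_nf
      · norm_num
    have hsum1 : ∀ δ, ∑ u, qExp p g δ u = 1 := by
      intro δ
      simp_rw [hshift]
      rw [← Finset.sum_div]
      have : (∑ u, p u * Real.exp (δ * (g u - m))) = Zt δ := rfl
      rw [this, div_self (hZpos δ).ne']
    have hKL : ∀ δ, KL (qExp p g δ) p =
        (∑ u, p u * Real.exp (δ * (g u - m)) * (δ * (g u - m))) / Zt δ - Real.log (Zt δ) := by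
      intro δ
      unfold KL
      have h1 : ∀ u, qExp p g δ u * Real.log (qExp p g δ u / p u)
          = p u * Real.exp (δ * (g u - m)) * (δ * (g u - m)) / Zt δ
            - qExp p g δ u * Real.log (Zt δ) := by
        intro u
        rw [hshift δ u]
        have hq : p u * Real.exp (δ * (g u - m)) / Zt δ / p u
            = Real.exp (δ * (g u - m)) / Zt δ := by
          rw [div_div, mul_comm (Zt δ) (p u), ← div_div,
            mul_div_cancel_left₀ _ (hppos u).ne']
        rw [hq, Real.log_div (Real.exp_ne_zero _) (hZpos δ).ne', Real.log_exp]
        ring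
      simp_rw [h1]
      rw [Finset.sum_sub_distrib, ← Finset.sum_mul, hsum1 δ, one_mul, ← Finset.sum_div]
    have hterm : ∀ u, Filter.Tendsto
        (fun δ => p u * Real.exp (δ * (g u - m)) * (δ * (g u - m))) Filter.atTop (nhds 0) := by
      intro u
      by_cases h : ∀ x, g x ≤ g u
      · have hg : g u - m = 0 := by rw [(hiff u).mp h]; ring
        simp [hg]
      · have h2 := hxex.comp (hAtBot u h)
        simp only [Function.comp_def] at h2
        have h3 := h2.const_mul (p u)
        rw [mul_zero] at h3
        exact h3.congr fun δ => by ring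
    have hS : Filter.Tendsto
        (fun δ => ∑ u, p u * Real.exp (δ * (g u - m)) * (δ * (g u - m)))
        Filter.atTop (nhds 0) := by
      have := tendsto_finset_sum univ (fun u (_ : u ∈ univ) => hterm u)
      simpa using this
    have hlog : Filter.Tendsto (fun δ => Real.log (Zt δ)) Filter.atTop (nhds (Real.log c)) :=
      (Real.continuousAt_log hcpos.ne').tendsto.comp hZlim
    have hfinal := (hS.div hZlim hcpos.ne').sub hlog
    have hz : (0:ℝ) / c - Real.log c = - Real.log c := by simp
    rw [hz] at hfinal
    exact hfinal.congr fun δ => (hKL δ).symm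
end

section
/- Let Σ be a nonempty finite set, let τ : Σ → ℝ, and let G = (G_u)_{u∈Σ} be a random vector whose coordinates are i.i.d. with the standard Gumbel distribution. Then almost surely the maximum of v ↦ G_v + τ_v is attained at a unique index, and for every u ∈ Σ, P(u = argmax_{v∈Σ}(G_v + τ_v)) = e^{τ_u} / Σ_{v∈Σ} e^{τ_v}. -/
open Finset MeasureTheory

noncomputable def gF (x : ℝ) : ℝ := Real.exp (-Real.exp (-x))

lemma gF_cont : Continuous gF := by unfold gF; fun_prop

lemma gF_pos (x : ℝ) : 0 < gF x := Real.exp_pos _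

lemma gF_le_one (x : ℝ) : gF x ≤ 1 := by
  rw [gF, show (1:ℝ) = Real.exp 0 by simp, Real.exp_le_exp]
  have := Real.exp_pos (-x); linarith

section Gumbel

variable (ν : Measure ℝ) [IsProbabilityMeasure ν]
  (hcdf : ∀ x : ℝ, ν (Set.Iic x) = ENNReal.ofReal (gF x))

include hcdf

lemma gumbel_singleton (x : ℝ) : ν {x} = 0 := by
  have hb : ∀ n : ℕ, ν {x} ≤ ENNReal.ofReal (gF x - gF (x - 1/(n+1))) := by
    intro n
    have hlt : x - 1/(n+1) < x := by
      have : (0:ℝ) < 1/(n+1) := by positivity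
      linarith
    have h1 : ν {x} ≤ ν (Set.Ioc (x - 1/(n+1)) x) := by
      apply measure_mono; intro y hy; simp_all
    refine h1.trans (le_of_eq ?_)
    have : Set.Ioc (x - 1/(n+1)) x = Set.Iic x \ Set.Iic (x - 1/(n+1)) := by
      ext y; simp [Set.mem_Ioc, Set.mem_diff, and_comm]
    rw [this, measure_diff (Set.Iic_subset_Iic.2 hlt.le) nullMeasurableSet_Iic
      (measure_ne_top ν _), hcdf, hcdf, ← ENNReal.ofReal_sub _ (gF_pos _).le]
  have htend : Filter.Tendsto (fun n : ℕ => ENNReal.ofReal (gF x - gF (x - 1/(n+1))))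
      Filter.atTop (nhds 0) := by
    have h1 : Filter.Tendsto (fun n : ℕ => x - 1/(n+1)) Filter.atTop (nhds x) := by
      have : Filter.Tendsto (fun n : ℕ => 1 / ((n : ℝ) + 1)) Filter.atTop (nhds 0) :=
        tendsto_one_div_add_atTop_nhds_zero_nat
      have := Filter.Tendsto.const_sub x this
      simpa using this
    have h2 : Filter.Tendsto (fun n : ℕ => gF x - gF (x - 1/(n+1))) Filter.atTop (nhds 0) := by
      have := (gF_cont.tendsto x).comp h1
      have := Filter.Tendsto.const_sub (gF x) this
      simpa using this
    have := (ENNReal.continuous_ofReal.tendsto 0).comp h2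
    simpa [Function.comp_def] using this
  have := ge_of_tendsto' htend hb
  simpa using this

lemma gumbel_noAtoms : NoAtoms ν := ⟨fun x => gumbel_singleton ν hcdf x⟩

lemma gumbel_Iio (x : ℝ) : ν (Set.Iio x) = ENNReal.ofReal (gF x) := by
  haveI : NullSingletonClass ν := ⟨fun x => gumbel_singleton ν hcdf x⟩
  rw [← hcdf x]
  exact measure_congr Iio_ae_eq_Iic

lemma gumbel_map : Measure.map gF ν = volume.restrict (Set.Ioc 0 1) := by
  haveI : IsProbabilityMeasure (volume.restrict (Set.Ioc (0:ℝ) 1)) := by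
    constructor
    rw [Measure.restrict_apply_univ]
    simp
  refine MeasureTheory.Measure.ext_of_Iic _ _ (fun t => ?_)
  rw [Measure.map_apply gF_cont.measurable measurableSet_Iic]
  rcases le_or_gt t 0 with ht | ht
  · have h1 : gF ⁻¹' Set.Iic t = ∅ := by
      ext x; simp only [Set.mem_preimage, Set.mem_Iic, Set.mem_empty_iff_false, iff_false, not_le]
      exact lt_of_le_of_lt ht (gF_pos x)
    have h2 : Set.Iic t ∩ Set.Ioc (0:ℝ) 1 = ∅ := by
      ext x; simp only [Set.mem_inter_iff, Set.mem_Iic, Set.mem_Ioc, Set.mem_empty_iff_false,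
        iff_false]
      rintro ⟨h, h0, -⟩; linarith
    rw [h1, Measure.restrict_apply measurableSet_Iic, h2]
    simp
  rcases lt_or_ge t 1 with ht1 | ht1
  · have hlt : Real.log t < 0 := Real.log_neg ht ht1
    have h1 : gF ⁻¹' Set.Iic t = Set.Iic (-Real.log (-Real.log t)) := by
      ext x
      simp only [Set.mem_preimage, Set.mem_Iic, gF]
      constructor
      · intro h
        have h' : -Real.exp (-x) ≤ Real.log t :=
          (Real.le_log_iff_exp_le ht).mpr h
        have h'' : -Real.log t ≤ Real.exp (-x) := by linarith
        have := (Real.log_le_iff_le_exp (by linarith)).mpr h''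
        linarith
      · intro h
        have h' : Real.log (-Real.log t) ≤ -x := by linarith
        have h'' : -Real.log t ≤ Real.exp (-x) := by
          rw [← Real.exp_log (x := -Real.log t) (by linarith)]
          exact Real.exp_le_exp.mpr h'
        have : -Real.exp (-x) ≤ Real.log t := by linarith
        calc Real.exp (-Real.exp (-x)) ≤ Real.exp (Real.log t) := Real.exp_le_exp.mpr this
          _ = t := Real.exp_log ht
    rw [h1, hcdf]
    have h3 : gF (-Real.log (-Real.log t)) = t := by
      rw [gF, neg_neg, Real.exp_log (by linarith), neg_neg, Real.exp_log ht]
    rw [h3, Measure.restrict_apply measurableSet_Iic]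
    have h2 : Set.Iic t ∩ Set.Ioc (0:ℝ) 1 = Set.Ioc 0 t := by
      ext x; simp only [Set.mem_inter_iff, Set.mem_Iic, Set.mem_Ioc]
      constructor
      · rintro ⟨h, h0, -⟩; exact ⟨h0, h⟩
      · rintro ⟨h0, h⟩; exact ⟨h, h0, by linarith⟩
    rw [h2, Real.volume_Ioc]
    simp
  · have h1 : gF ⁻¹' Set.Iic t = Set.univ := by
      ext x; simp only [Set.mem_preimage, Set.mem_Iic, Set.mem_univ, iff_true]
      exact (gF_le_one x).trans ht1
    have h2 : Set.Iic t ∩ Set.Ioc (0:ℝ) 1 = Set.Ioc 0 1 := by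
      ext x; simp only [Set.mem_inter_iff, Set.mem_Iic, Set.mem_Ioc]
      exact ⟨fun h => h.2, fun h => ⟨h.2.trans ht1, h⟩⟩
    rw [h1, Measure.restrict_apply measurableSet_Iic, h2, measure_univ, Real.volume_Ioc]
    simp

lemma gumbel_int {k : ℝ} (hk : 0 ≤ k) :
    ∫⁻ x, ENNReal.ofReal (gF x ^ k) ∂ν = ENNReal.ofReal (1/(k+1)) := by
  have hmeas : Measurable fun t : ℝ => ENNReal.ofReal (t ^ k) :=
    ENNReal.measurable_ofReal.comp (Real.continuous_rpow_const hk).measurable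
  calc ∫⁻ x, ENNReal.ofReal (gF x ^ k) ∂ν
      = ∫⁻ t, ENNReal.ofReal (t ^ k) ∂(Measure.map gF ν) := by
        rw [lintegral_map hmeas gF_cont.measurable]
    _ = ∫⁻ t in Set.Ioc (0:ℝ) 1, ENNReal.ofReal (t ^ k) ∂volume := by
        rw [gumbel_map ν hcdf]
    _ = ENNReal.ofReal (∫ t in Set.Ioc (0:ℝ) 1, t ^ k ∂volume) := by
        rw [ofReal_integral_eq_lintegral_ofReal]
        · exact (intervalIntegral.intervalIntegrable_rpow' (by linarith)).1
        · filter_upwards [self_mem_ae_restrict measurableSet_Ioc] with x hx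
          exact Real.rpow_nonneg hx.1.le k
    _ = ENNReal.ofReal (1/(k+1)) := by
        rw [← intervalIntegral.integral_of_le (by norm_num : (0:ℝ) ≤ 1),
          integral_rpow (Or.inl (by linarith))]
        norm_num [Real.zero_rpow (by linarith : k + 1 ≠ 0)]

end Gumbel

lemma pi_map_eval {ι : Type*} [Fintype ι] [DecidableEq ι] (ν : Measure ℝ)
    [IsProbabilityMeasure ν] (j : ι) :
    Measure.map (Function.eval j) (Measure.pi fun _ : ι => ν) = ν := by
  ext s hs
  rw [Measure.map_apply (measurable_pi_apply j) hs, ← Set.univ_pi_update_univ, Measure.pi_pi]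
  have h : ∀ i, ν (Function.update (fun _ : ι => Set.univ) j s i)
      = Function.update (fun _ : ι => (1:ENNReal)) j (ν s) i := by
    intro i; rcases eq_or_ne i j with rfl | hi
    · simp
    · simp [Function.update_of_ne hi]
  rw [Finset.prod_congr rfl (fun i _ => h i), Finset.prod_update_of_mem (Finset.mem_univ j)]
  simp

lemma pi_slice {V : Type*} [Fintype V] [DecidableEq V] (ν : Measure ℝ) [IsProbabilityMeasure ν]
    (hcdf : ∀ x : ℝ, ν (Set.Iic x) = ENNReal.ofReal (gF x)) (u : V) (c : V → ℝ) :
    (Measure.pi fun _ : V => ν) {g : V → ℝ | ∀ v, v ≠ u → g v < g u + c v}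
      = ∫⁻ t, ∏ v : {v : V // ¬ v = u}, ENNReal.ofReal (gF (t + c v)) ∂ν := by
  have hmp := measurePreserving_piEquivPiSubtypeProd (fun _ : V => ν) (fun v => v = u)
  set T : Set (({v : V // v = u} → ℝ) × ({v : V // ¬ v = u} → ℝ)) :=
    {q | ∀ v : {v : V // ¬ v = u}, q.2 v < q.1 ⟨u, rfl⟩ + c v} with hTdef
  have hT : MeasurableSet T := by
    have : T = ⋂ v : {v : V // ¬ v = u}, {q : ({v : V // v = u} → ℝ) × ({v : V // ¬ v = u} → ℝ) |
        q.2 v < q.1 ⟨u, rfl⟩ + c v} := by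
      ext q; simp [hTdef]
    rw [this]
    exact MeasurableSet.iInter fun v => measurableSet_lt (by fun_prop) (by fun_prop)
  have hpre : (MeasurableEquiv.piEquivPiSubtypeProd (fun _ : V => ℝ) (fun v => v = u)) ⁻¹' T
      = {g : V → ℝ | ∀ v, v ≠ u → g v < g u + c v} := by
    ext g
    simp only [Set.mem_preimage, MeasurableEquiv.piEquivPiSubtypeProd,
      MeasurableEquiv.coe_mk, Equiv.piEquivPiSubtypeProd_apply, hTdef, Set.mem_setOf_eq]
    constructor
    · intro h v hv; exact h ⟨v, hv⟩
    · intro h v; exact h v.1 v.2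
  have hφ : Measurable fun t : ℝ =>
      ∏ v : {v : V // ¬ v = u}, ENNReal.ofReal (gF (t + c v)) := by
    apply Finset.measurable_prod
    intro v _
    exact ENNReal.measurable_ofReal.comp
      ((gF_cont.comp (continuous_id.add continuous_const)).measurable)
  have h1 : ∀ x : {v : V // v = u} → ℝ, Prod.mk x ⁻¹' T = Set.pi Set.univ
      (fun v : {v : V // ¬ v = u} => Set.Iio (x ⟨u, rfl⟩ + c v)) := by
    intro x; ext y; simp [hTdef, Set.mem_pi]
  rw [← hpre, ← Measure.map_apply hmp.measurable hT, hmp.map_eq, Measure.prod_apply hT]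
  simp only [h1, Measure.pi_pi, gumbel_Iio ν hcdf]
  rw [← lintegral_map hφ (measurable_pi_apply (⟨u, rfl⟩ : {v : V // v = u}))]
  congr 1
  exact @pi_map_eval _ (Subtype.fintype fun v => v = u)
    (fun a b => decidable_of_iff _ Subtype.ext_iff.symm) ν _ ⟨u, rfl⟩

lemma pi_tie {V : Type*} [Fintype V] [DecidableEq V] (ν : Measure ℝ) [IsProbabilityMeasure ν]
    (hcdf : ∀ x : ℝ, ν (Set.Iic x) = ENNReal.ofReal (gF x)) (a b : V) (h : ¬ b = a) (c : ℝ) :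
    (Measure.pi fun _ : V => ν) {g : V → ℝ | g a = g b + c} = 0 := by
  have hmp := measurePreserving_piEquivPiSubtypeProd (fun _ : V => ν) (fun v => v = a)
  set T : Set (({v : V // v = a} → ℝ) × ({v : V // ¬ v = a} → ℝ)) :=
    {q | q.1 ⟨a, rfl⟩ = q.2 ⟨b, h⟩ + c} with hTdef
  have hT : MeasurableSet T := measurableSet_eq_fun (by fun_prop) (by fun_prop)
  have hpre : (MeasurableEquiv.piEquivPiSubtypeProd (fun _ : V => ℝ) (fun v => v = a)) ⁻¹' T
      = {g : V → ℝ | g a = g b + c} := by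
    ext g
    simp [hTdef, MeasurableEquiv.piEquivPiSubtypeProd, Equiv.piEquivPiSubtypeProd_apply]
  have h1 : ∀ x : {v : V // v = a} → ℝ, Prod.mk x ⁻¹' T =
      Function.eval (⟨b, h⟩ : {v : V // ¬ v = a}) ⁻¹' ({x ⟨a, rfl⟩ - c} : Set ℝ) := by
    intro x; ext y
    simp only [hTdef, Set.mem_preimage, Set.mem_setOf_eq, Function.eval, Set.mem_singleton_iff]
    constructor <;> intro hy <;> linarith
  rw [← hpre, ← Measure.map_apply hmp.measurable hT, hmp.map_eq, Measure.prod_apply hT]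
  simp only [h1]
  have h2 : ∀ x : {v : V // v = a} → ℝ,
      (Measure.pi fun _ : {v : V // ¬ v = a} => ν)
        (Function.eval (⟨b, h⟩ : {v : V // ¬ v = a}) ⁻¹' ({x ⟨a, rfl⟩ - c} : Set ℝ)) = 0 :=
    fun x => Measure.pi_eval_preimage_null _ (gumbel_singleton ν hcdf _)
  simp only [h2, lintegral_zero]

theorem stmt_5 {V : Type*} [Fintype V] [Nonempty V]
    {Ω : Type*} [MeasurableSpace Ω] (μ : Measure Ω) [IsProbabilityMeasure μ]
    (G : Ω → V → ℝ) (hG : Measurable G)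
    (ν : Measure ℝ) [IsProbabilityMeasure ν]
    -- `ν` is the standard Gumbel law: CDF `F(x) = exp (−exp (−x))`
    (hcdf : ∀ x : ℝ, ν (Set.Iic x) = ENNReal.ofReal (Real.exp (-Real.exp (-x))))
    -- the coordinates of `G` are i.i.d. with law `ν`
    (hlaw : Measure.map G μ = Measure.pi (fun _ : V => ν))
    (τ : V → ℝ) :
    -- a.s. the maximum of `v ↦ G v + τ v` is attained at a unique index
    (∀ᵐ ω ∂μ, ∃! u : V, ∀ v : V, v ≠ u → G ω v + τ v < G ω u + τ u) ∧
    -- Gumbel-max trick: `P(u = argmax_v (G v + τ v)) = e^{τ u} / ∑ v, e^{τ v}`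
    ∀ u : V,
      μ {ω | ∀ v : V, v ≠ u → G ω v + τ v < G ω u + τ u} =
        ENNReal.ofReal (Real.exp (τ u) / ∑ v, Real.exp (τ v)) := by
  classical
  have hcdf' : ∀ x : ℝ, ν (Set.Iic x) = ENNReal.ofReal (gF x) := hcdf
  -- Part two: the Gumbel-max trick probability
  have hpart2 : ∀ u : V,
      μ {ω | ∀ v : V, v ≠ u → G ω v + τ v < G ω u + τ u} =
        ENNReal.ofReal (Real.exp (τ u) / ∑ v, Real.exp (τ v)) := by
    intro u
    set k : ℝ := ∑ v : {v : V // ¬ v = u}, Real.exp (τ v - τ u) with hkdef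
    have hk : 0 ≤ k := Finset.sum_nonneg fun v _ => (Real.exp_pos _).le
    have hset : {ω | ∀ v : V, v ≠ u → G ω v + τ v < G ω u + τ u}
        = G ⁻¹' {g : V → ℝ | ∀ v, v ≠ u → g v < g u + (τ u - τ v)} := by
      ext ω
      simp only [Set.mem_setOf_eq, Set.mem_preimage]
      constructor <;> intro h v hv <;> have := h v hv <;> linarith
    have hA : MeasurableSet {g : V → ℝ | ∀ v, v ≠ u → g v < g u + (τ u - τ v)} := by
      have : {g : V → ℝ | ∀ v, v ≠ u → g v < g u + (τ u - τ v)}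
          = ⋂ v : V, {g : V → ℝ | v ≠ u → g v < g u + (τ u - τ v)} := by
        ext g; simp [Set.mem_iInter]
      rw [this]
      refine MeasurableSet.iInter fun v => ?_
      rcases eq_or_ne v u with rfl | hv
      · have : {g : V → ℝ | v ≠ v → g v < g v + (τ v - τ v)} = Set.univ := by
          ext g; simp
        rw [this]; exact MeasurableSet.univ
      · have : {g : V → ℝ | v ≠ u → g v < g u + (τ u - τ v)}
            = {g : V → ℝ | g v < g u + (τ u - τ v)} := by
          ext g; simp [hv]
        rw [this]; exact measurableSet_lt (by fun_prop) (by fun_prop)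
    rw [hset, ← Measure.map_apply hG hA, hlaw,
      pi_slice ν hcdf' u (fun v => τ u - τ v)]
    have hprod : ∀ t : ℝ,
        ∏ v : {v : V // ¬ v = u}, ENNReal.ofReal (gF (t + (τ u - τ ↑v)))
          = ENNReal.ofReal (gF t ^ k) := by
      intro t
      rw [← ENNReal.ofReal_prod_of_nonneg (fun v _ => (gF_pos _).le)]
      congr 1
      have step1 : ∀ v : {v : V // ¬ v = u},
          gF (t + (τ u - τ ↑v)) = Real.exp (-(Real.exp (-t) * Real.exp (τ ↑v - τ u))) := by
        intro v
        rw [gF, ← Real.exp_add]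
        congr 2
        ring_nf
      rw [Finset.prod_congr rfl (fun v _ => step1 v), ← Real.exp_sum]
      have step2 : ∑ v : {v : V // ¬ v = u}, -(Real.exp (-t) * Real.exp (τ ↑v - τ u))
          = -Real.exp (-t) * k := by
        rw [hkdef, Finset.mul_sum]
        simp [neg_mul]
      rw [step2, gF, Real.rpow_def_of_pos (Real.exp_pos _), Real.log_exp]
    rw [lintegral_congr hprod, gumbel_int ν hcdf' hk]
    congr 1
    -- `1/(k+1) = e^{τ u} / ∑ v, e^{τ v}`
    have hsub : k = ∑ v ∈ Finset.univ.erase u, Real.exp (τ v - τ u) := by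
      rw [hkdef]
      exact (Finset.sum_subtype (Finset.univ.erase u)
        (fun x => by simp [Finset.mem_erase]) (fun v => Real.exp (τ v - τ u))).symm
    have hkS : (k + 1) * Real.exp (τ u) = ∑ v, Real.exp (τ v) := by
      have h1 : k * Real.exp (τ u) = ∑ v ∈ Finset.univ.erase u, Real.exp (τ v) := by
        rw [hsub, Finset.sum_mul]
        refine Finset.sum_congr rfl fun v _ => ?_
        rw [← Real.exp_add]
        congr 1
        ring
      have h2 : Real.exp (τ u) + ∑ v ∈ Finset.univ.erase u, Real.exp (τ v)
          = ∑ v, Real.exp (τ v) :=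
        Finset.add_sum_erase _ (fun v => Real.exp (τ v)) (Finset.mem_univ u)
      calc (k + 1) * Real.exp (τ u) = k * Real.exp (τ u) + Real.exp (τ u) := by ring
        _ = ∑ v, Real.exp (τ v) := by rw [h1, ← h2]; ring
    have hk1 : (0:ℝ) < k + 1 := by linarith
    rw [← hkS]
    rw [eq_div_iff (by positivity)]
    field_simp
  -- ties have probability zero
  have htie : ∀ a b : V, a ≠ b → μ {ω | G ω a + τ a = G ω b + τ b} = 0 := by
    intro a b hab
    have hset : {ω | G ω a + τ a = G ω b + τ b}
        = G ⁻¹' {g : V → ℝ | g a = g b + (τ b - τ a)} := by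
      ext ω
      simp only [Set.mem_setOf_eq, Set.mem_preimage]
      constructor <;> intro h <;> linarith
    have hA : MeasurableSet {g : V → ℝ | g a = g b + (τ b - τ a)} :=
      measurableSet_eq_fun (by fun_prop) (by fun_prop)
    rw [hset, ← Measure.map_apply hG hA, hlaw]
    exact pi_tie ν hcdf' a b (fun h => hab h.symm) _
  have hbad : μ (⋃ (a : V) (b : V) (_ : a ≠ b), {ω | G ω a + τ a = G ω b + τ b}) = 0 :=
    measure_iUnion_null fun a => measure_iUnion_null fun b =>
      measure_iUnion_null fun hab => htie a b hab
  have hsub : {ω | ¬ ∃! u : V, ∀ v : V, v ≠ u → G ω v + τ v < G ω u + τ u}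
      ⊆ ⋃ (a : V) (b : V) (_ : a ≠ b), {ω | G ω a + τ a = G ω b + τ b} := by
    intro ω hω
    simp only [Set.mem_setOf_eq] at hω
    obtain ⟨u, -, hu_max⟩ := Finset.exists_max_image (Finset.univ : Finset V)
      (fun v => G ω v + τ v) Finset.univ_nonempty
    by_cases hstrict : ∀ v : V, v ≠ u → G ω v + τ v < G ω u + τ u
    · exfalso
      apply hω
      refine ⟨u, hstrict, ?_⟩
      intro y hy
      by_contra hyu
      have h1 : G ω u + τ u < G ω y + τ y := hy u (fun h => hyu h.symm)
      have h2 : G ω y + τ y < G ω u + τ u := hstrict y hyu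
      linarith
    · push_neg at hstrict
      obtain ⟨v, hvu, hge⟩ := hstrict
      have hle : G ω v + τ v ≤ G ω u + τ u := hu_max v (Finset.mem_univ v)
      have heq : G ω v + τ v = G ω u + τ u := le_antisymm hle hge
      exact Set.mem_iUnion.2 ⟨v, Set.mem_iUnion.2 ⟨u, Set.mem_iUnion.2 ⟨hvu, heq⟩⟩⟩
  exact ⟨ae_iff.mpr (measure_mono_null hsub hbad), hpart2⟩
end

section
/- Let Σ be a nonempty finite set, let τ : Σ → ℝ, and let G = (G_u)_{u∈Σ} be a random vector whose coordinates are i.i.d. with the standard Gumbel distribution. Then E[max_{v∈Σ}(G_v + τ_v)] = γ + log(Σ_{v∈Σ} e^{τ_v}), where γ is the Euler–Mascheroni constant. -/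
open MeasureTheory ProbabilityTheory Real Set Filter Asymptotics
open scoped NNReal ENNReal
set_option linter.unusedSectionVars false

lemma aux_mellin :
    MellinConvergent (fun t : ℝ => Real.log t • ((Real.exp (-t) : ℝ) : ℂ)) 1 ∧
      HasDerivAt (mellin fun x : ℝ => ((Real.exp (-x) : ℝ) : ℂ))
        (mellin (fun t : ℝ => Real.log t • ((Real.exp (-t) : ℝ) : ℂ)) 1) 1 := by
  refine mellin_hasDerivAt_of_isBigO_rpow (a := 2) (b := 0) ?_ ?_ (by norm_num) ?_ (by norm_num)
  · refine (Continuous.continuousOn ?_).locallyIntegrableOn measurableSet_Ioi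
    exact Complex.continuous_ofReal.comp (Real.continuous_exp.comp continuous_neg)
  · rw [← Asymptotics.isBigO_norm_left]
    simp_rw [Complex.norm_real,
      Asymptotics.isBigO_norm_left]
    simpa only [neg_one_mul] using (isLittleO_exp_neg_mul_rpow_atTop zero_lt_one _).isBigO
  · simp_rw [neg_zero, Real.rpow_zero]
    refine Asymptotics.isBigO_const_of_tendsto (?_ : Tendsto _ _ (nhds (1 : ℂ))) one_ne_zero
    rw [(by simp : (1 : ℂ) = Real.exp (-0))]
    exact (Complex.continuous_ofReal.comp
      (Real.continuous_exp.comp continuous_neg)).continuousWithinAt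

lemma aux_log_exp :
    IntegrableOn (fun t : ℝ => Real.log t * Real.exp (-t)) (Set.Ioi 0) ∧
    ∫ t in Set.Ioi 0, Real.log t * Real.exp (-t) = -Real.eulerMascheroniConstant := by
  obtain ⟨h1, h2⟩ := aux_mellin
  have e1 : (fun t : ℝ => (t : ℂ) ^ ((1:ℂ) - 1) • (Real.log t • ((Real.exp (-t) : ℝ) : ℂ)))
      = fun t : ℝ => ((Real.log t * Real.exp (-t) : ℝ) : ℂ) := by
    funext t
    simp [sub_self, Complex.cpow_zero, Complex.real_smul, Complex.ofReal_mul]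
  have hint : IntegrableOn (fun t : ℝ => Real.log t * Real.exp (-t)) (Set.Ioi 0) := by
    have := h1
    rw [MellinConvergent, e1] at this
    simpa [← Complex.ofReal_neg, Complex.exp_ofReal_re, IntegrableOn] using this.re
  refine ⟨hint, ?_⟩
  have hmval : mellin (fun t : ℝ => Real.log t • ((Real.exp (-t) : ℝ) : ℂ)) 1
      = ((∫ t in Set.Ioi 0, Real.log t * Real.exp (-t) : ℝ) : ℂ) := by
    rw [mellin]
    simp_rw [show ∀ t : ℝ, (t : ℂ) ^ ((1:ℂ) - 1) • (Real.log t • ((Real.exp (-t) : ℝ) : ℂ))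
        = ((Real.log t * Real.exp (-t) : ℝ) : ℂ) from fun t => congrFun e1 t]
    exact integral_ofReal
  have hΓ : HasDerivAt Complex.Gamma
      ((∫ t in Set.Ioi 0, Real.log t * Real.exp (-t) : ℝ) : ℂ) 1 := by
    have hGI : HasDerivAt Complex.GammaIntegral
        ((∫ t in Set.Ioi 0, Real.log t * Real.exp (-t) : ℝ) : ℂ) 1 := by
      rw [← hmval, Complex.GammaIntegral_eq_mellin]; exact h2
    refine hGI.congr_of_eventuallyEq ?_
    have hopen : IsOpen {s : ℂ | 0 < s.re} := isOpen_lt continuous_const Complex.continuous_re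
    filter_upwards [hopen.mem_nhds (by norm_num : (0:ℝ) < (1:ℂ).re)] with s hs
    exact Complex.Gamma_eq_integral hs
  have := Complex.hasDerivAt_Gamma_one.unique hΓ
  rw [← Complex.ofReal_neg] at this
  exact (Complex.ofReal_inj.mp this.symm)

-- facts about the exponential measure e := expMeasure 1
lemma aux_exp_Iic (x : ℝ) :
    expMeasure 1 (Set.Iic x) = ENNReal.ofReal (if 0 ≤ x then 1 - Real.exp (-x) else 0) := by
  rw [expMeasure, gammaMeasure, withDensity_apply _ measurableSet_Iic]
  have := lintegral_exponentialPDF_eq_antiDeriv one_pos x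
  simpa [exponentialPDF, exponentialPDFReal, gammaPDF, one_mul] using this

lemma aux_exp_map :
    ∀ (ν : Measure ℝ) [IsProbabilityMeasure ν],
    (∀ x : ℝ, ν (Set.Iic x) = ENNReal.ofReal (Real.exp (-Real.exp (-x)))) →
    Measure.map (fun t => -Real.log t) (expMeasure 1) = ν := by
  intro ν _ hcdf
  have : IsProbabilityMeasure (expMeasure 1) := isProbabilityMeasure_expMeasure one_pos
  have hmeas : Measurable (fun t : ℝ => -Real.log t) := measurable_log.neg
  have habs : expMeasure 1 ≪ (volume : Measure ℝ) := by
    rw [expMeasure, gammaMeasure]; exact withDensity_absolutelyContinuous _ _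
  haveI : IsProbabilityMeasure (Measure.map (fun t : ℝ => -Real.log t) (expMeasure 1)) :=
    Measure.isProbabilityMeasure_map hmeas.aemeasurable
  refine Measure.ext_of_Iic _ _ fun x => ?_
  rw [Measure.map_apply hmeas measurableSet_Iic, hcdf]
  have hpre : expMeasure 1 ((fun t : ℝ => -Real.log t) ⁻¹' Set.Iic x)
      = expMeasure 1 (Set.Ici (Real.exp (-x))) := by
    apply le_antisymm
    · have hsub : (fun t : ℝ => -Real.log t) ⁻¹' Set.Iic x
          ⊆ Set.Ici (Real.exp (-x)) ∪ Set.Iic 0 := by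
        intro t ht
        rcases le_or_gt t 0 with h | h
        · exact Or.inr h
        · refine Or.inl ?_
          have : -x ≤ Real.log t := by
            simp only [Set.mem_preimage, Set.mem_Iic] at ht; linarith
          calc Real.exp (-x) ≤ Real.exp (Real.log t) := Real.exp_le_exp.mpr this
          _ = t := Real.exp_log h
      refine (measure_mono hsub).trans ?_
      refine (measure_union_le _ _).trans ?_
      have h0 : expMeasure 1 (Set.Iic 0) = 0 := by
        rw [aux_exp_Iic]; simp
      simp [h0]
    · refine measure_mono fun t ht => ?_
      have h1 : (0:ℝ) < t := lt_of_lt_of_le (Real.exp_pos _) ht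
      simp only [Set.mem_preimage, Set.mem_Iic, neg_le]
      calc -x = Real.log (Real.exp (-x)) := (Real.log_exp _).symm
      _ ≤ Real.log t := Real.log_le_log (Real.exp_pos _) ht
  rw [hpre]
  have hcompl : Set.Ici (Real.exp (-x)) = (Set.Iio (Real.exp (-x)))ᶜ := by simp
  rw [hcompl, measure_compl measurableSet_Iio (measure_ne_top _ _), measure_univ]
  have hsing : expMeasure 1 {Real.exp (-x)} = 0 := habs (volume_singleton)
  have hIio : expMeasure 1 (Set.Iio (Real.exp (-x)))
      = ENNReal.ofReal (1 - Real.exp (-Real.exp (-x))) := by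
    rw [measure_congr (Iio_ae_eq_Iic' hsing), aux_exp_Iic, if_pos (Real.exp_pos _).le]
  rw [hIio, ← ENNReal.ofReal_one,
    ← ENNReal.ofReal_sub 1 (sub_nonneg.mpr (Real.exp_le_one_iff.mpr (neg_nonpos.mpr (Real.exp_pos _).le)))]
  norm_num

section
variable (hlogexp : IntegrableOn (fun t : ℝ => Real.log t * Real.exp (-t)) (Set.Ioi 0) ∧
    ∫ t in Set.Ioi 0, Real.log t * Real.exp (-t) = -Real.eulerMascheroniConstant)
  (ν : Measure ℝ) [IsProbabilityMeasure ν]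
  (hmap : Measure.map (fun t => -Real.log t) (expMeasure 1) = ν)

include hlogexp hmap in
lemma aux_gumbel_mean :
    Integrable id ν ∧ ∫ x, x ∂ν = Real.eulerMascheroniConstant := by
  obtain ⟨hint0, hval0⟩ := hlogexp
  have hmeas : Measurable (fun t : ℝ => -Real.log t) := measurable_log.neg
  haveI : IsProbabilityMeasure (expMeasure 1) := isProbabilityMeasure_expMeasure one_pos
  set g : ℝ → ℝ≥0 := fun t => Real.toNNReal (if 0 ≤ t then Real.exp (-t) else 0) with hg
  have hgmeas : Measurable g := by
    apply Measurable.real_toNNReal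
    exact Measurable.ite measurableSet_Ici (Real.measurable_exp.comp measurable_neg)
      measurable_const
  have hdens : expMeasure 1 = (volume : Measure ℝ).withDensity (fun t => (g t : ℝ≥0∞)) := by
    rw [expMeasure, gammaMeasure]
    congr 1
    funext t
    show gammaPDF 1 1 t = _
    have : gammaPDF 1 1 t = exponentialPDF 1 t := rfl
    rw [this, exponentialPDF_eq]
    simp only [one_mul, hg]
    rfl
  set F : ℝ → ℝ := Set.indicator (Set.Ici 0) (fun t => Real.exp (-t) * (-Real.log t)) with hF
  have hgco : ∀ t, ((g t : ℝ≥0∞)).toReal = (if 0 ≤ t then Real.exp (-t) else 0) := by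
    intro t
    rw [ENNReal.coe_toReal, hg, Real.coe_toNNReal]
    split_ifs
    · exact (Real.exp_pos _).le
    · exact le_refl 0
  have hFint : Integrable F (volume : Measure ℝ) := by
    refine IntegrableOn.integrable_indicator ?_ measurableSet_Ici
    rw [integrableOn_Ici_iff_integrableOn_Ioi]
    have : (fun t : ℝ => Real.exp (-t) * (-Real.log t))
        = fun t => -(Real.log t * Real.exp (-t)) := by funext t; ring
    rw [this]
    exact hint0.neg
  have hFval : ∫ t, F t ∂(volume : Measure ℝ) = Real.eulerMascheroniConstant := by
    rw [hF, integral_indicator measurableSet_Ici, integral_Ici_eq_integral_Ioi]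
    have : (fun t : ℝ => Real.exp (-t) * (-Real.log t))
        = fun t => -(Real.log t * Real.exp (-t)) := by funext t; ring
    rw [this, integral_neg, hval0, neg_neg]
  constructor
  · rw [← hmap]
    rw [integrable_map_measure aestronglyMeasurable_id hmeas.aemeasurable]
    show Integrable (fun t => -Real.log t) (expMeasure 1)
    rw [hdens, integrable_withDensity_iff hgmeas.coe_nnreal_ennreal
      (Eventually.of_forall fun t => ENNReal.coe_lt_top)]
    have : (fun t : ℝ => -Real.log t * ((g t : ℝ≥0∞)).toReal) = F := by
      funext t
      rw [hgco, hF]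
      by_cases h : (0:ℝ) ≤ t
      · rw [if_pos h, Set.indicator_of_mem (Set.mem_Ici.mpr h)]; ring
      · rw [if_neg h, Set.indicator_of_notMem (fun hc => h (Set.mem_Ici.mp hc)), mul_zero]
    rwa [this]
  · have hkey := integral_map (μ := expMeasure 1) (f := fun x : ℝ => x)
      hmeas.aemeasurable measurable_id.aestronglyMeasurable
    rw [← hmap, hkey]
    show ∫ t, -Real.log t ∂(expMeasure 1) = _
    rw [hdens, integral_withDensity_eq_integral_smul hgmeas]
    have : (fun t : ℝ => g t • (-Real.log t)) = F := by
      funext t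
      rw [NNReal.smul_def, smul_eq_mul, ← ENNReal.coe_toReal, hgco, hF]
      by_cases h : (0:ℝ) ≤ t
      · rw [if_pos h, Set.indicator_of_mem (Set.mem_Ici.mpr h)]
      · rw [if_neg h, Set.indicator_of_notMem (fun hc => h (Set.mem_Ici.mp hc)), zero_mul]
    rw [this, hFval]
end


theorem stmt_6 {V : Type*} [Fintype V] [Nonempty V]
    {Ω : Type*} [MeasurableSpace Ω] (μ : Measure Ω) [IsProbabilityMeasure μ]
    (G : Ω → V → ℝ) (hG : Measurable G)
    (ν : Measure ℝ) [IsProbabilityMeasure ν]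
    -- `ν` is the standard Gumbel law: CDF `F(x) = exp (−exp (−x))`
    (hcdf : ∀ x : ℝ, ν (Set.Iic x) = ENNReal.ofReal (Real.exp (-Real.exp (-x))))
    -- the coordinates of `G` are i.i.d. with law `ν`
    (hlaw : Measure.map G μ = Measure.pi (fun _ : V => ν))
    (τ : V → ℝ) :
    -- `E[max_v (G_v + τ_v)] = γ + log (∑ v, e^{τ_v})`
    ∫ ω, Finset.univ.sup' Finset.univ_nonempty (fun v => G ω v + τ v) ∂μ =
      Real.eulerMascheroniConstant + Real.log (∑ v, Real.exp (τ v)) := by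
  classical
  set S : ℝ := ∑ v, Real.exp (τ v) with hS
  have hSpos : 0 < S := Finset.sum_pos (fun v _ => Real.exp_pos _) Finset.univ_nonempty
  set c : ℝ := Real.log S with hc
  set M : Ω → ℝ := fun ω => Finset.univ.sup' Finset.univ_nonempty (fun v => G ω v + τ v) with hM
  have hMmeas : Measurable M := by
    have h0 : Measurable (Finset.univ.sup' Finset.univ_nonempty
        (fun v (ω : Ω) => G ω v + τ v)) :=
      Finset.measurable_sup' _ fun v _ => ((measurable_pi_apply v).comp hG).add_const _
    have heq : M = Finset.univ.sup' Finset.univ_nonempty (fun v (ω : Ω) => G ω v + τ v) := by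
      funext ω; exact (Finset.sup'_apply (C := fun _ : Ω => ℝ) Finset.univ_nonempty (fun v (ω : Ω) => G ω v + τ v) ω).symm
    rw [heq]; exact h0
  obtain ⟨hint, hval⟩ := aux_gumbel_mean aux_log_exp ν (aux_exp_map ν hcdf)
  have hshift : Measurable (fun y : ℝ => y + c) := measurable_add_const c
  have hmapM : Measure.map M μ = Measure.map (fun y => y + c) ν := by
    haveI : IsProbabilityMeasure (Measure.map M μ) :=
      Measure.isProbabilityMeasure_map hMmeas.aemeasurable
    refine Measure.ext_of_Iic _ _ fun x => ?_
    rw [Measure.map_apply hMmeas measurableSet_Iic, Measure.map_apply hshift measurableSet_Iic]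
    have h1 : M ⁻¹' Set.Iic x = G ⁻¹' (Set.univ.pi fun v => Set.Iic (x - τ v)) := by
      ext ω
      simp only [Set.mem_preimage, Set.mem_Iic, hM, Finset.sup'_le_iff, Set.mem_pi,
        Set.mem_univ, forall_true_left, le_sub_iff_add_le, Finset.mem_univ, true_implies]
    have h2 : (fun y : ℝ => y + c) ⁻¹' Set.Iic x = Set.Iic (x - c) := by
      ext y; simp [le_sub_iff_add_le]
    rw [h1, ← Measure.map_apply hG (MeasurableSet.univ_pi fun v => measurableSet_Iic), hlaw,
      Measure.pi_pi, h2, hcdf]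
    simp_rw [hcdf]
    rw [← ENNReal.ofReal_prod_of_nonneg (fun v _ => (Real.exp_pos _).le)]
    congr 1
    rw [← Real.exp_sum]
    congr 1
    have hterm : ∀ v : V, -Real.exp (-(x - τ v)) = Real.exp (τ v) * -Real.exp (-x) := by
      intro v
      rw [mul_neg, ← Real.exp_add]
      ring_nf
    rw [Finset.sum_congr rfl fun v _ => hterm v, ← Finset.sum_mul, ← hS]
    have hx : Real.exp (-(x - c)) = S * Real.exp (-x) := by
      rw [neg_sub, Real.exp_sub, hc, Real.exp_log hSpos, Real.exp_neg, div_eq_mul_inv]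
    rw [hx, mul_neg]
  have h3 : ∫ ω, M ω ∂μ = ∫ x, x ∂(Measure.map M μ) :=
    (integral_map hMmeas.aemeasurable measurable_id.aestronglyMeasurable).symm
  calc ∫ ω, M ω ∂μ = ∫ x, x ∂(Measure.map (fun y => y + c) ν) := by rw [h3, hmapM]
    _ = ∫ y, (y + c) ∂ν :=
        integral_map hshift.aemeasurable measurable_id.aestronglyMeasurable
    _ = (∫ y, y ∂ν) + c := by
        have h := integral_add (μ := ν) hint (integrable_const c)
        simpa using h
    _ = Real.eulerMascheroniConstant + c := by
        simpa using hval
end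

section
/- Let Σ be a nonempty finite set, let p ∈ Δ(Σ) have full support, let g : Σ → ℝ, and let δ > 0. Then there exists μ ∈ ℝ such that the distribution q* defined by q*_u = p_u·[1 + δ(g_u + μ)]_+ (where [x]_+ = max(0,x)) lies in Δ(Σ) and maximizes the functional q ↦ Σ_{u∈Σ} g_u q_u − (1/(2δ))·χ²(q, p) over q ∈ Δ(Σ). -/
open Finset

/-- χ² distance `χ²(q, p) = ∑ u, (q u − p u)² / p u`. -/
noncomputable def chiSq {V : Type*} [Fintype V] (q p : V → ℝ) : ℝ :=
  ∑ u, (q u - p u) ^ 2 / p u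

/-- Pointwise optimality of the truncated quadratic maximizer. -/
lemma pointwise_opt (p δ a q : ℝ) (hp : 0 < p) (hδ : 0 < δ) (hq : 0 ≤ q) :
    a * q - (q - p) ^ 2 / (2 * δ * p) ≤
      a * (p * max 0 (1 + δ * a)) - (p * max 0 (1 + δ * a) - p) ^ 2 / (2 * δ * p) := by
  have hd : (0:ℝ) < 2 * δ * p := by positivity
  have e : ∀ A x : ℝ, A - x / (2 * δ * p) = (A * (2 * δ * p) - x) / (2 * δ * p) := by
    intro A x; field_simp
  rw [e, e, div_le_div_iff_of_pos_right hd]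
  rcases max_cases 0 (1 + δ * a) with ⟨hm, hle⟩ | ⟨hm, hle⟩
  · rw [hm]
    nlinarith [sq_nonneg q, mul_pos hδ hp, mul_nonneg hq (mul_pos hδ hp).le]
  · rw [hm]
    nlinarith [sq_nonneg (q - p * (1 + δ * a)), mul_pos hδ hp]

theorem stmt_14 {V : Type*} [Fintype V] [Nonempty V]
    (p : V → ℝ) (hp : p ∈ simplex V) (hppos : ∀ u, 0 < p u)
    (g : V → ℝ) (δ : ℝ) (hδ : 0 < δ) :
    ∃ μ : ℝ,
      -- `q*_u = p_u [1 + δ (g_u + μ)]₊` is a distribution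
      (fun u => p u * max 0 (1 + δ * (g u + μ))) ∈ simplex V ∧
      -- and it maximizes the penalized objective over the simplex
      (∀ q ∈ simplex V,
        ∑ u, g u * q u - (1 / (2 * δ)) * chiSq q p ≤
          ∑ u, g u * (p u * max 0 (1 + δ * (g u + μ))) -
            (1 / (2 * δ)) * chiSq (fun u => p u * max 0 (1 + δ * (g u + μ))) p) := by
  obtain ⟨hp0, hp1⟩ := hp
  set f : ℝ → ℝ := fun μ => ∑ u, p u * max 0 (1 + δ * (g u + μ)) with hf
  have hcont : Continuous f := by
    apply continuous_finset_sum
    intro u _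
    exact continuous_const.mul (continuous_const.max (by continuity))
  set μ₀ : ℝ := -(1/δ) - univ.sup' univ_nonempty g with hμ₀
  set μ₁ : ℝ := univ.sup' univ_nonempty (fun u => -g u) with hμ₁
  have hf0 : f μ₀ = 0 := by
    apply Finset.sum_eq_zero
    intro u _
    have hgu : g u ≤ univ.sup' univ_nonempty g := Finset.le_sup' g (mem_univ u)
    have : 1 + δ * (g u + μ₀) ≤ 0 := by
      have : δ * (g u + μ₀) = δ * (g u - univ.sup' univ_nonempty g) - 1 := by
        rw [hμ₀]; field_simp; ring
      nlinarith [mul_nonpos_of_nonneg_of_nonpos hδ.le (by linarith : g u - univ.sup' univ_nonempty g ≤ 0)]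
    rw [max_eq_left this, mul_zero]
  have hf1 : 1 ≤ f μ₁ := by
    rw [← hp1]
    apply Finset.sum_le_sum
    intro u _
    have hgu : -g u ≤ μ₁ := Finset.le_sup' (fun u => -g u) (mem_univ u)
    have h1 : (1:ℝ) ≤ max 0 (1 + δ * (g u + μ₁)) := by
      have : 0 ≤ δ * (g u + μ₁) := mul_nonneg hδ.le (by linarith)
      exact le_max_of_le_right (by linarith)
    nlinarith [hppos u]
  have hmem : (1:ℝ) ∈ Set.uIcc (f μ₀) (f μ₁) := by
    rw [Set.mem_uIcc]; left; constructor <;> [rw [hf0]; exact hf1]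
    norm_num
  obtain ⟨μ, _, hμ⟩ := intermediate_value_uIcc (hcont.continuousOn (s := Set.uIcc μ₀ μ₁)) hmem
  refine ⟨μ, ⟨fun u => mul_nonneg (hppos u).le (le_max_left _ _), hμ⟩, ?_⟩
  rintro q ⟨hq0, hq1⟩
  -- pointwise inequality with a = g u + μ
  set Q : V → ℝ := fun u => p u * max 0 (1 + δ * (g u + μ)) with hQ
  have key : ∀ u ∈ univ, (g u + μ) * q u - (q u - p u) ^ 2 / (2 * δ * p u) ≤
      (g u + μ) * Q u - (Q u - p u) ^ 2 / (2 * δ * p u) := by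
    intro u _
    exact pointwise_opt (p u) δ (g u + μ) (q u) (hppos u) hδ (hq0 u)
  have hsum := Finset.sum_le_sum key
  have expand : ∀ r : V → ℝ, ∑ u, ((g u + μ) * r u - (r u - p u) ^ 2 / (2 * δ * p u)) =
      ∑ u, g u * r u + μ * ∑ u, r u - (1 / (2 * δ)) * chiSq r p := by
    intro r
    rw [chiSq, Finset.mul_sum, Finset.mul_sum, ← Finset.sum_add_distrib, ← Finset.sum_sub_distrib]
    refine Finset.sum_congr rfl fun u _ => ?_
    have hpu := (hppos u).ne'
    field_simp
  rw [expand q, expand Q] at hsum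
  have hQsum : ∑ u, Q u = 1 := hμ
  rw [hq1, hQsum] at hsum
  have : chiSq Q p = chiSq (fun u => p u * max 0 (1 + δ * (g u + μ))) p := rfl
  linarith [hsum]
end

section
/- Let Σ be a nonempty finite set, let p ∈ Δ(Σ) have full support, let g : Σ → ℝ be non-constant, and let δ > 0 satisfy δ ≤ 1/(max_{u∈Σ} g_u − min_{u∈Σ} g_u). Then the function q* defined by q*_u = p_u·(1 + δ(g_u − Σ_{v∈Σ} p_v g_v)) lies in Δ(Σ) and maximizes the functional q ↦ Σ_{u∈Σ} g_u q_u − (1/(2δ))·χ²(q, p) over q ∈ Δ(Σ). -/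
open Finset

theorem stmt_15 {V : Type*} [Fintype V] [Nonempty V]
    (p : V → ℝ) (hp : p ∈ simplex V) (hppos : ∀ u, 0 < p u)
    (g : V → ℝ) (hg : ∃ u v, g u ≠ g v)
    (δ : ℝ) (hδ : 0 < δ)
    (hδle : δ ≤ 1 / (Finset.univ.sup' Finset.univ_nonempty g -
      Finset.univ.inf' Finset.univ_nonempty g)) :
    -- `q*_u = p_u (1 + δ (g_u − ∑ v, p_v g_v))` is a distribution
    (fun u => p u * (1 + δ * (g u - ∑ v, p v * g v))) ∈ simplex V ∧
    -- and it maximizes the penalized objective over the simplex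
    (∀ q ∈ simplex V,
      ∑ u, g u * q u - (1 / (2 * δ)) * chiSq q p ≤
        ∑ u, g u * (p u * (1 + δ * (g u - ∑ v, p v * g v))) -
          (1 / (2 * δ)) *
            chiSq (fun u => p u * (1 + δ * (g u - ∑ v, p v * g v))) p) := by
  obtain ⟨hpnn, hp1⟩ := hp
  set m : ℝ := ∑ v, p v * g v with hm
  set M : ℝ := Finset.univ.sup' Finset.univ_nonempty g with hM
  set L : ℝ := Finset.univ.inf' Finset.univ_nonempty g with hL
  have hLM : 0 < M - L := by
    obtain ⟨u, v, huv⟩ := hg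
    have hu1 : g u ≤ M := Finset.le_sup' g (Finset.mem_univ u)
    have hu2 : L ≤ g u := Finset.inf'_le g (Finset.mem_univ u)
    have hv1 : g v ≤ M := Finset.le_sup' g (Finset.mem_univ v)
    have hv2 : L ≤ g v := Finset.inf'_le g (Finset.mem_univ v)
    rcases lt_or_gt_of_ne huv with h | h <;> linarith
  have hδR : δ * (M - L) ≤ 1 := (le_div_iff₀ hLM).mp hδle
  have hmM : m ≤ M := by
    calc m = ∑ v, p v * g v := hm
    _ ≤ ∑ v, p v * M := by
        refine Finset.sum_le_sum fun v _ => ?_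
        exact mul_le_mul_of_nonneg_left (Finset.le_sup' g (Finset.mem_univ v)) (hppos v).le
    _ = M := by rw [← Finset.sum_mul, hp1, one_mul]
  have hfac : ∀ u, 0 ≤ 1 + δ * (g u - m) := by
    intro u
    have h1 : L ≤ g u := Finset.inf'_le g (Finset.mem_univ u)
    nlinarith [mul_nonneg hδ.le (by linarith : (0:ℝ) ≤ (g u - m) - (L - M))]
  have hsum : ∑ u, p u * (1 + δ * (g u - m)) = 1 := by
    have he : ∀ u ∈ Finset.univ, p u * (1 + δ * (g u - m))
        = p u + δ * (p u * g u) - (δ * m) * p u := fun u _ => by ring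
    rw [Finset.sum_congr rfl he, Finset.sum_sub_distrib, Finset.sum_add_distrib,
      ← Finset.mul_sum, ← Finset.mul_sum, hp1, ← hm]
    ring
  refine ⟨⟨fun u => mul_nonneg (hppos u).le (hfac u), hsum⟩, ?_⟩
  rintro q ⟨hqnn, hq1⟩
  set c : ℝ := 1 / (2 * δ) with hc
  set qs : V → ℝ := fun u => p u * (1 + δ * (g u - m)) with hqs
  have hterm : ∀ u ∈ Finset.univ,
      g u * qs u - g u * q u + c * ((q u - p u) ^ 2 / p u - (qs u - p u) ^ 2 / p u
        - (q u - qs u) ^ 2 / p u) = m * (qs u - q u) := by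
    intro u _
    have hp' : p u ≠ 0 := (hppos u).ne'
    have hδ' : δ ≠ 0 := hδ.ne'
    simp only [hqs, hc]
    field_simp
    ring
  have hkey : (∑ u, g u * qs u) - (∑ u, g u * q u)
      + c * (chiSq q p - chiSq qs p - ∑ u, (q u - qs u) ^ 2 / p u) = 0 := by
    have h1 : ∑ u, (g u * qs u - g u * q u + c * ((q u - p u) ^ 2 / p u
        - (qs u - p u) ^ 2 / p u - (q u - qs u) ^ 2 / p u)) = ∑ u, m * (qs u - q u) :=
      Finset.sum_congr rfl hterm
    rw [Finset.sum_add_distrib, Finset.sum_sub_distrib, ← Finset.mul_sum,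
      Finset.sum_sub_distrib, Finset.sum_sub_distrib, ← Finset.mul_sum,
      Finset.sum_sub_distrib, hsum, hq1] at h1
    unfold chiSq
    simp only [hqs] at h1 ⊢
    linarith [h1]
  have hD : 0 ≤ ∑ u, (q u - qs u) ^ 2 / p u :=
    Finset.sum_nonneg fun u _ => div_nonneg (sq_nonneg _) (hppos u).le
  have hcpos : 0 < c := by positivity
  have := mul_nonneg hcpos.le hD
  simp only [hqs] at hkey
  linarith [hkey]
end

section
/- Let Σ be a nonempty finite set, let p ∈ Δ(Σ) have full support, let m ∈ ℕ, and let g^{(1)}, …, g^{(m)} : Σ → {0,1}. Define q^{(0)} = p and, recursively, q^{(i)}_u = q^{(i−1)}_u · (1 + (g^{(i)}_u − Σ_{v∈Σ} q^{(i−1)}_v g^{(i)}_v)) for all u ∈ Σ. Then each q^{(i)} lies in Δ(Σ), and for every i ∈ {1,…,m}, q^{(i)} maximizes the functional q ↦ Σ_{u∈Σ} g^{(i)}_u q_u − (1/2)·Σ_{u∈Σ} (q_u − q^{(i−1)}_u)²/q^{(i−1)}_u over q ∈ Δ(Σ). -/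
open Finset

theorem stmt_16 {V : Type*} [Fintype V] [Nonempty V]
    (p : V → ℝ) (hp : p ∈ simplex V) (hppos : ∀ u, 0 < p u)
    (m : ℕ) (g : Fin m → V → ℝ)
    -- the scores are binary: `g^{(i)}_u ∈ {0, 1}`
    (hg : ∀ i u, g i u = 0 ∨ g i u = 1)
    -- `Q 0 = p` and `Q (i+1)_u = Q i_u (1 + (g^{(i+1)}_u − ∑ v, Q i_v g^{(i+1)}_v))`
    (Q : ℕ → V → ℝ) (hQ0 : Q 0 = p)
    (hQrec : ∀ i : Fin m, ∀ u,
      Q (i + 1) u = Q i u * (1 + (g i u - ∑ v, Q i v * g i v))) :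
    -- each `Q i`, `i = 0, …, m`, is a distribution
    (∀ i : ℕ, i ≤ m → Q i ∈ simplex V) ∧
    -- and `Q (i+1)` maximizes the `χ²`-penalized objective relative to `Q i`
    (∀ i : Fin m, ∀ q ∈ simplex V,
      ∑ u, g i u * q u - (1 / 2) * ∑ u, (q u - Q i u) ^ 2 / Q i u ≤
        ∑ u, g i u * Q (i + 1) u -
          (1 / 2) * ∑ u, (Q (i + 1) u - Q i u) ^ 2 / Q i u) := by
  -- strong invariant: positivity and sum 1
  have key : ∀ i : ℕ, i ≤ m → (∀ u, 0 < Q i u) ∧ ∑ u, Q i u = 1 := by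
    intro i
    induction i with
    | zero =>
      intro _
      exact ⟨by simpa [hQ0] using hppos, by simpa [hQ0] using hp.2⟩
    | succ n ih =>
      intro hn
      have hnm : n < m := hn
      obtain ⟨hpos, hsum⟩ := ih (le_of_lt hnm)
      have hrec := hQrec ⟨n, hnm⟩
      simp only [Fin.val_mk] at hrec  -- hopefully Q (↑⟨n,hnm⟩+1) = Q (n+1)
      set μ := ∑ v, Q n v * g ⟨n, hnm⟩ v with hμ
      have hg0 : ∀ u, 0 ≤ g ⟨n, hnm⟩ u := fun u => by
        rcases hg ⟨n, hnm⟩ u with h | h <;> simp [h]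
      have hg1 : ∀ u, g ⟨n, hnm⟩ u ≤ 1 := fun u => by
        rcases hg ⟨n, hnm⟩ u with h | h <;> simp [h]
      have hμ1 : ∀ u, Q n u * (1 - g ⟨n, hnm⟩ u) ≤ 1 - μ := by
        intro u
        have h1 : 1 - μ = ∑ v, Q n v * (1 - g ⟨n, hnm⟩ v) := by
          simp only [mul_sub, mul_one, Finset.sum_sub_distrib, hsum, hμ]
        rw [h1]
        exact Finset.single_le_sum
          (fun v _ => mul_nonneg (hpos v).le (sub_nonneg.mpr (hg1 v)))
          (Finset.mem_univ u)
      have hfac : ∀ u, 0 < 1 + (g ⟨n, hnm⟩ u - μ) := by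
        intro u
        rcases hg ⟨n, hnm⟩ u with h | h
        · have := hμ1 u
          rw [h] at this ⊢
          have := hpos u
          nlinarith
        · have := hμ1 u
          rw [h] at this ⊢
          nlinarith [hpos u]
      constructor
      · intro u
        rw [hrec u]
        exact mul_pos (hpos u) (hfac u)
      · have : ∑ u, Q (n + 1) u = ∑ u, Q n u * (1 + (g ⟨n, hnm⟩ u - μ)) :=
          Finset.sum_congr rfl fun u _ => hrec u
        rw [this]
        have expand : ∀ u, Q n u * (1 + (g ⟨n, hnm⟩ u - μ))
            = Q n u + Q n u * g ⟨n, hnm⟩ u - μ * Q n u := by intro u; ring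
        rw [Finset.sum_congr rfl fun u _ => expand u]
        rw [Finset.sum_sub_distrib, Finset.sum_add_distrib, ← Finset.mul_sum, hsum, ← hμ]
        ring
  refine ⟨fun i hi => (fun ⟨a, b⟩ => ⟨fun u => (a u).le, b⟩) (key i hi), ?_⟩
  intro i q hq
  obtain ⟨hpos, hsum⟩ := key i (le_of_lt i.isLt)
  obtain ⟨hpos', hsum'⟩ := key (i + 1) i.isLt
  set μ := ∑ v, Q i v * g i v with hμ
  have h1 : ∀ u, g i u * Q (i + 1) u - g i u * q u +
      (1 / 2) * ((q u - Q i u) ^ 2 / Q i u - (Q (i + 1) u - Q i u) ^ 2 / Q i u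
        - (q u - Q (i + 1) u) ^ 2 / Q i u)
      = μ * (Q (i + 1) u - q u) := by
    intro u
    rw [hQrec i u, ← hμ]
    have hne := (hpos u).ne'
    field_simp
    ring
  have h2 : ∑ u, (g i u * Q (i + 1) u - g i u * q u +
      (1 / 2) * ((q u - Q i u) ^ 2 / Q i u - (Q (i + 1) u - Q i u) ^ 2 / Q i u
        - (q u - Q (i + 1) u) ^ 2 / Q i u))
      = ∑ u, μ * (Q (i + 1) u - q u) :=
    Finset.sum_congr rfl fun u _ => h1 u
  have h3 : ∑ u, μ * (Q (i + 1) u - q u) = 0 := by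
    rw [← Finset.mul_sum, Finset.sum_sub_distrib, hsum', hq.2]
    ring
  rw [h3] at h2
  simp only [Finset.sum_add_distrib, Finset.sum_sub_distrib, ← Finset.mul_sum] at h2
  have hC : 0 ≤ ∑ u, (q u - Q (i + 1) u) ^ 2 / Q i u :=
    Finset.sum_nonneg fun u _ => div_nonneg (sq_nonneg _) (hpos u).le
  nlinarith [h2, hC]
end

section
/- Let Σ be a nonempty finite set, let p ∈ Δ(Σ) have full support, let g : Σ → ℝ, and let ε ≥ 0. Consider maximizing the linear functional q ↦ Σ_{u∈Σ} g_u q_u over the feasible set {q ∈ Δ(Σ) : −Σ_{u∈Σ} q_u log p_u ≤ −Σ_{u∈Σ} p_u log p_u + ε}. Then this feasible set is nonempty and compact, and there exists an optimal solution q* whose support has size at most 2, i.e. q* is a convex combination of at most two Dirac point masses. -/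
open Finset

/-- The feasible set of the hard-PPL constrained problem:
distributions `q` with `−∑ u, q u log p u ≤ −∑ u, p u log p u + ε`. -/
noncomputable def pplFeasible {V : Type*} [Fintype V] (p : V → ℝ) (ε : ℝ) : Set (V → ℝ) :=
  {q | q ∈ simplex V ∧
    -∑ u, q u * Real.log (p u) ≤ -∑ u, p u * Real.log (p u) + ε}

section Aux

variable {V : Type*} [Fintype V]

open Classical in
private lemma sum_tri (a b c : V) (hab : a ≠ b) (hac : a ≠ c) (hbc : b ≠ c)
    (x y z : ℝ) (f : V → ℝ) :
    ∑ u, (if u = a then x else if u = b then y else if u = c then z else 0) * f u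
      = x * f a + y * f b + z * f c := by
  rw [← Finset.sum_subset (Finset.subset_univ ({a, b, c} : Finset V))]
  · rw [show ({a, b, c} : Finset V) = insert a (insert b {c}) from rfl,
      Finset.sum_insert (by simp [hab, hac]), Finset.sum_insert (by simp [hbc]),
      Finset.sum_singleton]
    · simp [hab.symm, hac.symm, hbc.symm]; ring
  · intro u _ hu
    simp only [Finset.mem_insert, Finset.mem_singleton, not_or] at hu
    simp [hu.1, hu.2.1, hu.2.2]

open Classical in
private lemma step_lemma (p : V → ℝ) (ε : ℝ) (g : V → ℝ)
    (q : V → ℝ) (hq : q ∈ pplFeasible p ε)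
    (hmax : ∀ q' ∈ pplFeasible p ε, ∑ u, g u * q' u ≤ ∑ u, g u * q u)
    (d : V → ℝ)
    (hsum : ∑ u, d u = 0)
    (hL : ∑ u, d u * Real.log (p u) = 0)
    (hsupp : ∀ u, q u = 0 → d u = 0)
    (hneg : ∃ u, d u < 0)
    (hg : 0 ≤ ∑ u, g u * d u) :
    ∃ q'' ∈ pplFeasible p ε,
      (∀ q' ∈ pplFeasible p ε, ∑ u, g u * q' u ≤ ∑ u, g u * q'' u) ∧
      (Finset.univ.filter (fun u => q'' u ≠ 0)).card
        < (Finset.univ.filter (fun u => q u ≠ 0)).card := by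
  obtain ⟨hqs, hqc⟩ := hq
  obtain ⟨hq0, hq1⟩ := hqs
  set T : Finset V := Finset.univ.filter (fun u => d u < 0) with hT
  have hTne : T.Nonempty := by
    obtain ⟨u, hu⟩ := hneg
    exact ⟨u, by simp [hT, hu]⟩
  set t : ℝ := T.inf' hTne (fun u => q u / (-d u)) with htdef
  have hqpos : ∀ u ∈ T, 0 < q u := by
    intro u hu
    have hdu : d u < 0 := by simpa [hT] using hu
    have : q u ≠ 0 := fun h => absurd (hsupp u h) (by simp [hdu.ne])
    exact lt_of_le_of_ne (hq0 u) (Ne.symm this)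
  have ht0 : 0 < t := by
    rw [htdef, Finset.lt_inf'_iff]
    intro u hu
    have hdu : d u < 0 := by simpa [hT] using hu
    exact div_pos (hqpos u hu) (by linarith)
  obtain ⟨u0, hu0T, hu0⟩ := Finset.exists_mem_eq_inf' hTne (fun u => q u / (-d u))
  have hdu0 : d u0 < 0 := by simpa [hT] using hu0T
  set q'' : V → ℝ := fun u => q u + t * d u with hq''def
  have hnn : ∀ u, 0 ≤ q'' u := by
    intro u
    by_cases hdu : d u < 0
    · have hle : t ≤ q u / (-d u) := Finset.inf'_le _ (by simp [hT, hdu])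
      have := (le_div_iff₀ (by linarith : (0:ℝ) < -d u)).mp hle
      simp only [hq''def]
      nlinarith
    · push_neg at hdu
      have : 0 ≤ t * d u := mul_nonneg ht0.le hdu
      simp only [hq''def]
      linarith [hq0 u]
  have hsum'' : ∑ u, q'' u = 1 := by
    simp only [hq''def]
    rw [Finset.sum_add_distrib, ← Finset.mul_sum, hsum, hq1]
    ring
  have hLsum : ∑ u, q'' u * Real.log (p u) = ∑ u, q u * Real.log (p u) := by
    simp only [hq''def]
    have : ∀ u, (q u + t * d u) * Real.log (p u)
        = q u * Real.log (p u) + t * (d u * Real.log (p u)) := by intro u; ring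
    rw [Finset.sum_congr rfl (fun u _ => this u), Finset.sum_add_distrib,
      ← Finset.mul_sum, hL]
    ring
  have hfeas : q'' ∈ pplFeasible p ε := ⟨⟨hnn, hsum''⟩, by rw [hLsum]; exact hqc⟩
  have hobj : ∑ u, g u * q u ≤ ∑ u, g u * q'' u := by
    simp only [hq''def]
    have : ∀ u, g u * (q u + t * d u) = g u * q u + t * (g u * d u) := by intro u; ring
    rw [Finset.sum_congr rfl (fun u _ => this u), Finset.sum_add_distrib,
      ← Finset.mul_sum]
    nlinarith
  have hq''u0 : q'' u0 = 0 := by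
    simp only [hq''def]
    rw [htdef, hu0]
    have hne0 : d u0 ≠ 0 := hdu0.ne
    rw [div_mul_eq_mul_div, mul_div_assoc, div_neg, div_self hne0]
    ring
  have hssub : Finset.univ.filter (fun u => q'' u ≠ 0)
      ⊂ Finset.univ.filter (fun u => q u ≠ 0) := by
    constructor
    · intro u hu
      simp only [Finset.mem_filter, Finset.mem_univ, true_and] at hu ⊢
      intro h
      exact hu (by simp [hq''def, hsupp u h, h])
    · intro hsub
      have hu0mem : u0 ∈ Finset.univ.filter (fun u => q u ≠ 0) := by
        simp only [Finset.mem_filter, Finset.mem_univ, true_and]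
        exact (hqpos u0 hu0T).ne'
      have := hsub hu0mem
      simp only [Finset.mem_filter, Finset.mem_univ, true_and] at this
      exact this hq''u0
  exact ⟨q'', hfeas, fun q' hq' => le_trans (hmax q' hq') hobj,
    Finset.card_lt_card hssub⟩

open Classical in
private lemma reduce_lemma (p : V → ℝ) (ε : ℝ) (g : V → ℝ)
    (q : V → ℝ) (hq : q ∈ pplFeasible p ε)
    (hmax : ∀ q' ∈ pplFeasible p ε, ∑ u, g u * q' u ≤ ∑ u, g u * q u)
    (h3 : 2 < (Finset.univ.filter (fun u => q u ≠ 0)).card) :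
    ∃ q'' ∈ pplFeasible p ε,
      (∀ q' ∈ pplFeasible p ε, ∑ u, g u * q' u ≤ ∑ u, g u * q'' u) ∧
      (Finset.univ.filter (fun u => q'' u ≠ 0)).card
        < (Finset.univ.filter (fun u => q u ≠ 0)).card := by
  obtain ⟨a, b, c, ha, hb, hc, hab, hac, hbc⟩ := Finset.two_lt_card_iff.mp h3
  simp only [Finset.mem_filter, Finset.mem_univ, true_and] at ha hb hc
  set L : V → ℝ := fun u => Real.log (p u) with hLdef
  -- choose coefficients
  obtain ⟨x, y, z, hxyz0, hxyzL, hne⟩ :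
      ∃ x y z : ℝ, x + y + z = 0 ∧ x * L a + y * L b + z * L c = 0 ∧
        (x ≠ 0 ∨ y ≠ 0 ∨ z ≠ 0) := by
    by_cases hLab : L a = L b
    · exact ⟨1, -1, 0, by ring, by rw [hLab]; ring, Or.inl one_ne_zero⟩
    · exact ⟨L b - L c, L c - L a, L a - L b, by ring, by ring,
        Or.inr (Or.inr (sub_ne_zero.mpr (fun h => hLab (by linarith)))) ⟩
  set d : V → ℝ := fun u => if u = a then x else if u = b then y else if u = c then z else 0
    with hddef
  have hdsum : ∑ u, d u = 0 := by
    have := sum_tri a b c hab hac hbc x y z (fun _ => 1)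
    simpa [hddef, hxyz0] using this
  have hdL : ∑ u, d u * L u = 0 := by
    have := sum_tri a b c hab hac hbc x y z L
    simp only [hddef]
    rw [this, hxyzL]
  have hdsupp : ∀ u, q u = 0 → d u = 0 := by
    intro u hu
    have h1 : u ≠ a := fun h => ha (h ▸ hu)
    have h2 : u ≠ b := fun h => hb (h ▸ hu)
    have h3 : u ≠ c := fun h => hc (h ▸ hu)
    simp [hddef, h1, h2, h3]
  have hdne : ∃ u, d u ≠ 0 := by
    rcases hne with h | h | h
    · exact ⟨a, by simpa [hddef] using h⟩
    · exact ⟨b, by simpa [hddef, Ne.symm hab] using h⟩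
    · exact ⟨c, by simpa [hddef, Ne.symm hac, Ne.symm hbc] using h⟩
  -- a nonzero function with zero sum has a negative value
  have keyneg : ∀ e : V → ℝ, (∑ u, e u = 0) → (∃ u, e u ≠ 0) → ∃ u, e u < 0 := by
    intro e hesum ⟨u, hu⟩
    by_contra h
    push_neg at h
    have := (Finset.sum_eq_zero_iff_of_nonneg (fun v _ => h v)).mp hesum u (Finset.mem_univ u)
    exact hu this
  by_cases hgd : 0 ≤ ∑ u, g u * d u
  · exact step_lemma p ε g q hq hmax d hdsum hdL hdsupp
      (keyneg d hdsum hdne) hgd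
  · push_neg at hgd
    have h1 : ∑ u, (fun u => -d u) u = 0 := by simpa using hdsum
    have h2 : ∑ u, (fun u => -d u) u * L u = 0 := by
      have : ∀ u, (-d u) * L u = -(d u * L u) := fun u => by ring
      rw [Finset.sum_congr rfl (fun u _ => this u), Finset.sum_neg_distrib, hdL, neg_zero]
    have h3' : ∀ u, q u = 0 → -d u = 0 := fun u hu => by rw [hdsupp u hu]; ring
    have h4 : ∃ u, -d u < 0 := by
      obtain ⟨u, hu⟩ := hdne
      exact keyneg _ h1 ⟨u, by simpa using hu⟩
    have h5 : 0 ≤ ∑ u, g u * (-d u) := by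
      have : ∀ u, g u * (-d u) = -(g u * d u) := fun u => by ring
      rw [Finset.sum_congr rfl (fun u _ => this u), Finset.sum_neg_distrib]
      linarith
    exact step_lemma p ε g q hq hmax (fun u => -d u) h1 h2 h3' h4 h5

end Aux

theorem stmt_17 {V : Type*} [Fintype V] [Nonempty V]
    (p : V → ℝ) (hp : p ∈ simplex V) (hppos : ∀ u, 0 < p u)
    (g : V → ℝ) (ε : ℝ) (hε : 0 ≤ ε) :
    -- the feasible set is nonempty and compact
    (pplFeasible p ε).Nonempty ∧ IsCompact (pplFeasible p ε) ∧
    -- and there is an optimal solution supported on at most two points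
    ∃ q ∈ pplFeasible p ε,
      (∀ q' ∈ pplFeasible p ε, ∑ u, g u * q' u ≤ ∑ u, g u * q u) ∧
      (Finset.univ.filter (fun u => q u ≠ 0)).card ≤ 2 := by
  classical
  have hpf : p ∈ pplFeasible p ε := ⟨hp, by linarith⟩
  have hsub : pplFeasible p ε ⊆ stdSimplex ℝ V := fun q hq => hq.1
  have hcontL : Continuous fun q : V → ℝ => -∑ u, q u * Real.log (p u) := by
    exact (continuous_finset_sum _ fun u _ =>
      (continuous_apply u).mul continuous_const).neg
  have hclosed : IsClosed (pplFeasible p ε) := by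
    have h1 : IsClosed {q : V → ℝ |
        -∑ u, q u * Real.log (p u) ≤ -∑ u, p u * Real.log (p u) + ε} :=
      isClosed_le hcontL continuous_const
    have h2 : IsClosed (simplex V) := isClosed_stdSimplex ℝ V
    exact h2.inter h1
  have hcomp : IsCompact (pplFeasible p ε) :=
    IsCompact.of_isClosed_subset (isCompact_stdSimplex ℝ V) hclosed hsub
  refine ⟨⟨p, hpf⟩, hcomp, ?_⟩
  -- existence of a maximizer
  have hcont : Continuous fun q : V → ℝ => ∑ u, g u * q u :=
    continuous_finset_sum _ fun u _ => continuous_const.mul (continuous_apply u)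
  obtain ⟨q0, hq0, hmax0⟩ := hcomp.exists_isMaxOn ⟨p, hpf⟩ hcont.continuousOn
  have hmax0' : ∀ q' ∈ pplFeasible p ε, ∑ u, g u * q' u ≤ ∑ u, g u * q0 u :=
    fun q' hq' => hmax0 hq'
  -- strong induction on support size
  have main : ∀ n : ℕ, ∀ q : V → ℝ, q ∈ pplFeasible p ε →
      (∀ q' ∈ pplFeasible p ε, ∑ u, g u * q' u ≤ ∑ u, g u * q u) →
      (Finset.univ.filter (fun u => q u ≠ 0)).card ≤ n →
      ∃ q'' ∈ pplFeasible p ε,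
        (∀ q' ∈ pplFeasible p ε, ∑ u, g u * q' u ≤ ∑ u, g u * q'' u) ∧
        (Finset.univ.filter (fun u => q'' u ≠ 0)).card ≤ 2 := by
    intro n
    induction n using Nat.strong_induction_on with
    | _ n ih =>
      intro q hq hmax hcard
      by_cases h2 : (Finset.univ.filter (fun u => q u ≠ 0)).card ≤ 2
      · exact ⟨q, hq, hmax, h2⟩
      · push_neg at h2
        obtain ⟨q'', hq'', hmax'', hlt⟩ := reduce_lemma p ε g q hq hmax h2
        exact ih (Finset.univ.filter (fun u => q'' u ≠ 0)).card
          (lt_of_lt_of_le hlt hcard) q'' hq'' hmax'' le_rfl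
  exact main (Finset.univ.filter (fun u => q0 u ≠ 0)).card q0 hq0 hmax0' le_rfl
end

section
/- Let Σ be a nonempty finite set, let p ∈ Δ(Σ) have full support, let G = (G_u)_{u∈Σ} be a random vector whose coordinates are i.i.d. from an atomless (continuous) probability law on ℝ with finite first moment, and let ε ≥ 0. Consider the problem of maximizing E[Σ_{u∈Σ} G_u q(G)_u] over measurable functions q : ℝ^Σ → Δ(Σ) subject to Σ_{u∈Σ} (p_u − E[q(G)_u])·log p_u ≤ ε. Then there exists λ ≥ 0 such that the function q*(g)_u = 1{u = argmax_{v∈Σ}(g_v + λ log p_v)} is an optimal solution, where λ is chosen so that Σ_{u∈Σ} (p_u − E[q*(G)_u])·log p_u = ε if such λ exists, and λ = 0 otherwise. -/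
open Finset MeasureTheory

/-- A choice of maximizer of `f : V → ℝ`. -/
noncomputable def argmaxOf {V : Type*} [Fintype V] [Nonempty V] (f : V → ℝ) : V :=
  (Finset.exists_max_image Finset.univ f Finset.univ_nonempty).choose

open Classical in
/-- The deterministic sampling rule `q*(g)_u = 1{u = argmax_v (g_v + λ log p_v)}`. -/
noncomputable def qArgmax {V : Type*} [Fintype V] [Nonempty V] (p : V → ℝ) (l : ℝ) :
    (V → ℝ) → V → ℝ :=
  fun g u => if u = argmaxOf (fun v => g v + l * Real.log (p v)) then 1 else 0

set_option linter.unusedSectionVars false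

section Aux
variable {V : Type*} [Fintype V] [Nonempty V]

lemma argmaxOf_spec (f : V → ℝ) (a : V) : f a ≤ f (argmaxOf f) :=
  (Finset.exists_max_image Finset.univ f Finset.univ_nonempty).choose_spec.2 a (Finset.mem_univ a)

lemma argmaxOf_eq_of_lt {f : V → ℝ} {w : V} (h : ∀ a, a ≠ w → f a < f w) : argmaxOf f = w := by
  by_contra hne
  exact absurd (argmaxOf_spec f w) (not_le.2 (h _ hne))

private lemma choose_eq_choose {α : Sort*} {P Q : α → Prop} (h : P = Q) (hP : ∃ x, P x)
    (hQ : ∃ x, Q x) : hP.choose = hQ.choose := by subst h; rfl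

lemma argmaxOf_congr {f f' : V → ℝ} (h : ∀ b, (∀ a, f a ≤ f b) ↔ (∀ a, f' a ≤ f' b)) :
    argmaxOf f = argmaxOf f' := by
  unfold argmaxOf
  refine choose_eq_choose ?_ _ _
  funext b
  exact propext ⟨fun hb => ⟨hb.1, fun a _ => (h b).1 (fun a => hb.2 a (Finset.mem_univ a)) a⟩,
    fun hb => ⟨hb.1, fun a _ => (h b).2 (fun a => hb.2 a (Finset.mem_univ a)) a⟩⟩

open Classical in
noncomputable def maxSet (f : V → ℝ) : Finset V := Finset.univ.filter (fun b => ∀ a, f a ≤ f b)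

open Classical in
noncomputable def pickOf (S : Finset V) : V := argmaxOf (fun b => if b ∈ S then (1:ℝ) else 0)

lemma mem_maxSet {f : V → ℝ} {b : V} : b ∈ maxSet f ↔ ∀ a, f a ≤ f b := by
  classical
  simp [maxSet]

lemma argmaxOf_mem_maxSet (f : V → ℝ) : argmaxOf f ∈ maxSet f :=
  mem_maxSet.2 (argmaxOf_spec f)

open Classical in
lemma argmaxOf_eq_pickOf (f : V → ℝ) : argmaxOf f = pickOf (maxSet f) := by
  apply argmaxOf_congr
  intro b
  constructor
  · intro hb a
    have hbmem : b ∈ maxSet f := mem_maxSet.2 hb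
    rw [if_pos hbmem]
    split <;> norm_num
  · intro hb
    have h1 : (if (argmaxOf f) ∈ maxSet f then (1:ℝ) else 0) ≤ if b ∈ maxSet f then (1:ℝ) else 0 :=
      hb _
    rw [if_pos (argmaxOf_mem_maxSet f)] at h1
    have hbmem : b ∈ maxSet f := by
      by_contra hc
      rw [if_neg hc] at h1; norm_num at h1
    exact mem_maxSet.1 hbmem
end Aux

section Aux2
variable {V : Type*} [Fintype V] [Nonempty V]

lemma measurableSet_maxSet_eq (c : V → ℝ) (S : Finset V) :
    MeasurableSet {g : V → ℝ | maxSet (fun v => g v + c v) = S} := by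
  classical
  have hrw : {g : V → ℝ | maxSet (fun v => g v + c v) = S}
      = ⋂ b, {g : V → ℝ | b ∈ S ↔ ∀ a, g a + c a ≤ g b + c b} := by
    ext g
    simp only [Set.mem_setOf_eq, Set.mem_iInter, Finset.ext_iff, mem_maxSet]
    exact ⟨fun h b => (h b).symm, fun h b => (h b).symm⟩
  rw [hrw]
  refine MeasurableSet.iInter fun b => ?_
  have hle : MeasurableSet (⋂ a, {g : V → ℝ | g a + c a ≤ g b + c b}) :=
    MeasurableSet.iInter fun a => measurableSet_le
      ((measurable_pi_apply a).add_const _) ((measurable_pi_apply b).add_const _)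
  by_cases hb : b ∈ S
  · simp only [hb, true_iff]
    have : {g : V → ℝ | ∀ a, g a + c a ≤ g b + c b}
        = ⋂ a, {g : V → ℝ | g a + c a ≤ g b + c b} := by ext g; simp
    rw [this]; exact hle
  · simp only [hb, false_iff]
    have : {g : V → ℝ | ¬ ∀ a, g a + c a ≤ g b + c b}
        = (⋂ a, {g : V → ℝ | g a + c a ≤ g b + c b})ᶜ := by ext g; simp
    rw [this]; exact hle.compl

lemma measurableSet_argmax (c : V → ℝ) (u : V) :
    MeasurableSet {g : V → ℝ | argmaxOf (fun v => g v + c v) = u} := by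
  have hrw : {g : V → ℝ | argmaxOf (fun v => g v + c v) = u}
      = ⋃ S ∈ {S : Finset V | pickOf S = u}, {g : V → ℝ | maxSet (fun v => g v + c v) = S} := by
    ext g
    simp only [Set.mem_setOf_eq, Set.mem_iUnion, argmaxOf_eq_pickOf]
    exact ⟨fun h => ⟨_, h, rfl⟩, fun ⟨S, h1, h2⟩ => by rw [h2, h1]⟩
  rw [hrw]
  exact MeasurableSet.biUnion (Set.to_countable _) fun S _ => measurableSet_maxSet_eq c S

lemma measurable_qArgmax (p : V → ℝ) (l : ℝ) : Measurable (qArgmax p l) := by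
  refine measurable_pi_lambda _ fun u => ?_
  have hms : MeasurableSet {g : V → ℝ | u = argmaxOf (fun v => g v + l * Real.log (p v))} := by
    have h := measurableSet_argmax (V := V) (fun v => l * Real.log (p v)) u
    have : {g : V → ℝ | u = argmaxOf (fun v => g v + l * Real.log (p v))}
        = {g : V → ℝ | argmaxOf (fun v => g v + l * Real.log (p v)) = u} := by
      ext g; simp [eq_comm]
    rw [this]; exact h
  exact Measurable.ite hms measurable_const measurable_const

lemma qArgmax_mem_simplex (p : V → ℝ) (l : ℝ) (g : V → ℝ) : qArgmax p l g ∈ simplex V := by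
  classical
  constructor
  · intro u; unfold qArgmax; split <;> norm_num
  · unfold qArgmax; simp

lemma sum_mul_qArgmax (p : V → ℝ) (l : ℝ) (g f : V → ℝ) :
    ∑ u, f u * qArgmax p l g u = f (argmaxOf (fun v => g v + l * Real.log (p v))) := by
  classical
  unfold qArgmax
  simp [mul_ite, Finset.sum_ite_eq']

end Aux2

section MeasAux
variable {V : Type*} [Fintype V] [Nonempty V]

lemma map_eval_pi_prob (ν : Measure ℝ) [IsProbabilityMeasure ν] (u : V) :
    Measure.map (Function.eval u) (Measure.pi (fun _ : V => ν)) = ν := by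
  classical
  apply Measure.ext
  intro s hs
  rw [Measure.map_apply (measurable_pi_apply u) hs, Set.eval_preimage, Measure.pi_pi]
  rw [Finset.prod_eq_single u (fun i _ hi => by
    rw [Function.update_of_ne hi]; exact measure_univ) (fun h => absurd (Finset.mem_univ u) h)]
  rw [Function.update_self]

lemma map_pair_pi_prob (ν : Measure ℝ) [IsProbabilityMeasure ν] {u v : V} (huv : u ≠ v) :
    Measure.map (fun g : V → ℝ => (g u, g v)) (Measure.pi (fun _ : V => ν)) = ν.prod ν := by
  classical
  refine (Measure.prod_eq fun s t hs ht => ?_).symm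
  have hmeas : Measurable (fun g : V → ℝ => (g u, g v)) :=
    (measurable_pi_apply u).prodMk (measurable_pi_apply v)
  rw [Measure.map_apply hmeas (hs.prod ht)]
  have hpre : (fun g : V → ℝ => (g u, g v)) ⁻¹' (s ×ˢ t)
      = Set.pi Set.univ (fun i => if i = u then s else if i = v then t else Set.univ) := by
    ext g
    simp only [Set.mem_preimage, Set.mem_prod, Set.mem_pi, Set.mem_univ, true_implies]
    constructor
    · rintro ⟨h1, h2⟩ i
      split
      · next h => rw [h]; exact h1
      · split
        · next h => rw [h]; exact h2
        · exact Set.mem_univ _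
    · intro h
      refine ⟨?_, ?_⟩
      · have := h u; rwa [if_pos rfl] at this
      · have := h v; rwa [if_neg (Ne.symm huv), if_pos rfl] at this
  rw [hpre, Measure.pi_pi]
  have h1 : ∀ i ∈ Finset.univ \ {u, v},
      ν (if i = u then s else if i = v then t else Set.univ) = 1 := by
    intro i hi
    simp only [Finset.mem_sdiff, Finset.mem_insert, Finset.mem_singleton, not_or] at hi
    rw [if_neg hi.2.1, if_neg hi.2.2]
    exact measure_univ
  rw [← Finset.prod_sdiff (Finset.subset_univ ({u, v} : Finset V)),
    Finset.prod_eq_one h1, one_mul, Finset.prod_pair huv, if_pos rfl,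
    if_neg (Ne.symm huv), if_pos rfl]

lemma prod_diag_null (ν : Measure ℝ) [IsProbabilityMeasure ν] (hatomless : ∀ x : ℝ, ν {x} = 0)
    (t : ℝ) : (ν.prod ν) {q : ℝ × ℝ | q.1 = q.2 + t} = 0 := by
  have hms : MeasurableSet {q : ℝ × ℝ | q.1 = q.2 + t} :=
    measurableSet_eq_fun measurable_fst (measurable_snd.add_const t)
  rw [Measure.prod_apply hms]
  have : ∀ x : ℝ, ν (Prod.mk x ⁻¹' {q : ℝ × ℝ | q.1 = q.2 + t}) = 0 := by
    intro x
    have : Prod.mk x ⁻¹' {q : ℝ × ℝ | q.1 = q.2 + t} = {x - t} := by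
      ext y; simp [Set.mem_preimage, eq_comm, sub_eq_iff_eq_add, eq_sub_iff_add_eq]
    rw [this]; exact hatomless _
  simp only [this, lintegral_zero]

end MeasAux

theorem stmt_18 {V : Type*} [Fintype V] [Nonempty V]
    {Ω : Type*} [MeasurableSpace Ω] (μ : Measure Ω) [IsProbabilityMeasure μ]
    (G : Ω → V → ℝ) (hG : Measurable G)
    (ν : Measure ℝ) [IsProbabilityMeasure ν]
    -- `ν` is atomless and has a finite first moment
    (hatomless : ∀ x : ℝ, ν {x} = 0)
    (hmom : Integrable (fun x : ℝ => x) ν)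
    -- the coordinates of `G` are i.i.d. with law `ν`
    (hlaw : Measure.map G μ = Measure.pi (fun _ : V => ν))
    (p : V → ℝ) (hp : p ∈ simplex V) (hppos : ∀ u, 0 < p u)
    (ε : ℝ) (hε : 0 ≤ ε) :
    ∃ l : ℝ, 0 ≤ l ∧
      -- `q*` is feasible: measurable, simplex-valued, and satisfies the soft
      -- PPL constraint `∑ u, (p u − E[q*(G) u]) log p u ≤ ε`
      Measurable (qArgmax p l) ∧
      (∀ g, qArgmax p l g ∈ simplex V) ∧
      (∑ u, (p u - ∫ ω, qArgmax p l (G ω) u ∂μ) * Real.log (p u)) ≤ ε ∧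
      -- `q*` is optimal among all feasible sampling rules
      (∀ q : (V → ℝ) → V → ℝ, Measurable q → (∀ g, q g ∈ simplex V) →
        (∑ u, (p u - ∫ ω, q (G ω) u ∂μ) * Real.log (p u)) ≤ ε →
        ∫ ω, ∑ u, G ω u * q (G ω) u ∂μ ≤
          ∫ ω, ∑ u, G ω u * qArgmax p l (G ω) u ∂μ) ∧
      -- `l` saturates the constraint if possible, else `l = 0`
      ((∑ u, (p u - ∫ ω, qArgmax p l (G ω) u ∂μ) * Real.log (p u)) = ε ∨ l = 0) := by
  classical
  -- basic facts about the coordinates of `G`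
  have hGmeas : ∀ u, Measurable (fun ω => G ω u) := fun u => (measurable_pi_apply u).comp hG
  have hGu_law : ∀ u : V, Measure.map (fun ω => G ω u) μ = ν := by
    intro u
    have h1 : (fun ω => G ω u) = (Function.eval u) ∘ G := rfl
    rw [h1, ← Measure.map_map (measurable_pi_apply u) hG, hlaw, map_eval_pi_prob]
  have hGint : ∀ u, Integrable (fun ω => G ω u) μ := by
    intro u
    have h := integrable_map_measure (μ := μ) (f := fun ω => G ω u) (g := fun x : ℝ => x)
      (by rw [hGu_law u]; exact measurable_id.aestronglyMeasurable) (hGmeas u).aemeasurable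
    rw [hGu_law u] at h
    exact h.1 hmom
  have hGsum : Integrable (fun ω => ∑ u, |G ω u|) μ :=
    integrable_finset_sum _ fun u _ => (hGint u).abs
  -- bounds for simplex-valued functions
  have hqle1 : ∀ (q : V → ℝ), q ∈ simplex V → ∀ u, q u ≤ 1 := by
    intro q hq u
    calc q u ≤ ∑ v, q v := Finset.single_le_sum (fun v _ => hq.1 v) (Finset.mem_univ u)
    _ = 1 := hq.2
  -- integrability package for a measurable simplex-valued sampling rule
  have hints : ∀ q : (V → ℝ) → V → ℝ, Measurable q → (∀ g, q g ∈ simplex V) →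
      (∀ u, Integrable (fun ω => q (G ω) u) μ) ∧
      Integrable (fun ω => ∑ u, G ω u * q (G ω) u) μ ∧
      Integrable (fun ω => ∑ u, q (G ω) u * Real.log (p u)) μ := by
    intro q hq hqs
    have hqmeas : ∀ u, Measurable (fun ω => q (G ω) u) :=
      fun u => ((measurable_pi_apply u).comp hq).comp hG
    have hqu : ∀ u, Integrable (fun ω => q (G ω) u) μ := by
      intro u
      refine Integrable.mono' (integrable_const 1) (hqmeas u).aestronglyMeasurable
        (ae_of_all _ fun ω => ?_)
      rw [Real.norm_eq_abs, abs_of_nonneg ((hqs (G ω)).1 u)]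
      exact hqle1 _ (hqs (G ω)) u
    refine ⟨hqu, ?_, ?_⟩
    · refine Integrable.mono' hGsum ?_ (ae_of_all _ fun ω => ?_)
      · exact (Finset.measurable_sum _ fun u _ => (hGmeas u).mul (hqmeas u)).aestronglyMeasurable
      · calc ‖∑ u, G ω u * q (G ω) u‖ ≤ ∑ u, ‖G ω u * q (G ω) u‖ := norm_sum_le _ _
        _ ≤ ∑ u, |G ω u| := by
            refine Finset.sum_le_sum fun u _ => ?_
            rw [norm_mul, Real.norm_eq_abs, Real.norm_eq_abs,
              abs_of_nonneg ((hqs (G ω)).1 u)]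
            exact mul_le_of_le_one_right (abs_nonneg _) (hqle1 _ (hqs (G ω)) u)
    · refine Integrable.mono' (integrable_const (∑ u, |Real.log (p u)|)) ?_
        (ae_of_all _ fun ω => ?_)
      · exact (Finset.measurable_sum _ fun u _ =>
          (hqmeas u).mul measurable_const).aestronglyMeasurable
      · calc ‖∑ u, q (G ω) u * Real.log (p u)‖
            ≤ ∑ u, ‖q (G ω) u * Real.log (p u)‖ := norm_sum_le _ _
        _ ≤ ∑ u, |Real.log (p u)| := by
            refine Finset.sum_le_sum fun u _ => ?_
            rw [norm_mul, Real.norm_eq_abs, Real.norm_eq_abs,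
              abs_of_nonneg ((hqs (G ω)).1 u)]
            exact mul_le_of_le_one_left (abs_nonneg _) (hqle1 _ (hqs (G ω)) u)
  -- the q* rules are measurable and simplex valued
  have hq'meas : ∀ l : ℝ, Measurable (qArgmax p l) := fun l => measurable_qArgmax p l
  have hq'simp : ∀ l : ℝ, ∀ g, qArgmax p l g ∈ simplex V := fun l g => qArgmax_mem_simplex p l g
  -- the constraint functional, rewritten through an integral
  have hbridge : ∀ q : (V → ℝ) → V → ℝ, Measurable q → (∀ g, q g ∈ simplex V) →
      (∑ u, (p u - ∫ ω, q (G ω) u ∂μ) * Real.log (p u))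
        = (∑ u, p u * Real.log (p u)) - ∫ ω, ∑ u, q (G ω) u * Real.log (p u) ∂μ := by
    intro q hq hqs
    rw [integral_finset_sum _ fun u _ => ((hints q hq hqs).1 u).mul_const _]
    rw [← Finset.sum_sub_distrib]
    congr 1
    funext u
    rw [sub_mul, integral_mul_const]
  -- pointwise Lagrangian optimality of q*
  have hpoint : ∀ l : ℝ, ∀ q : (V → ℝ) → V → ℝ, (∀ g, q g ∈ simplex V) → ∀ g : V → ℝ,
      (∑ u, g u * q g u) + l * ∑ u, q g u * Real.log (p u) ≤
      (∑ u, g u * qArgmax p l g u) + l * ∑ u, qArgmax p l g u * Real.log (p u) := by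
    intro l q hqs g
    have hrhs : (∑ u, g u * qArgmax p l g u) + l * ∑ u, qArgmax p l g u * Real.log (p u)
        = g (argmaxOf (fun v => g v + l * Real.log (p v)))
          + l * Real.log (p (argmaxOf (fun v => g v + l * Real.log (p v)))) := by
      rw [sum_mul_qArgmax p l g g]
      congr 1
      rw [show (∑ u, qArgmax p l g u * Real.log (p u))
          = ∑ u, Real.log (p u) * qArgmax p l g u by
        exact Finset.sum_congr rfl fun u _ => mul_comm _ _]
      rw [sum_mul_qArgmax p l g (fun u => Real.log (p u))]
    rw [hrhs]
    calc (∑ u, g u * q g u) + l * ∑ u, q g u * Real.log (p u)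
        = ∑ u, (g u + l * Real.log (p u)) * q g u := by
          rw [Finset.mul_sum, ← Finset.sum_add_distrib]
          exact Finset.sum_congr rfl fun u _ => by ring
      _ ≤ ∑ u, (g (argmaxOf (fun v => g v + l * Real.log (p v)))
            + l * Real.log (p (argmaxOf (fun v => g v + l * Real.log (p v))))) * q g u :=
          Finset.sum_le_sum fun u _ => mul_le_mul_of_nonneg_right
            (argmaxOf_spec (fun v => g v + l * Real.log (p v)) u) ((hqs g).1 u)
      _ = _ := by rw [← Finset.mul_sum, (hqs g).2, mul_one]
  -- integrated Lagrangian inequality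
  have hlag : ∀ l : ℝ, ∀ q : (V → ℝ) → V → ℝ, Measurable q → (∀ g, q g ∈ simplex V) →
      (∫ ω, ∑ u, G ω u * q (G ω) u ∂μ) + l * ∫ ω, ∑ u, q (G ω) u * Real.log (p u) ∂μ ≤
      (∫ ω, ∑ u, G ω u * qArgmax p l (G ω) u ∂μ)
        + l * ∫ ω, ∑ u, qArgmax p l (G ω) u * Real.log (p u) ∂μ := by
    intro l q hq hqs
    have h1 := (hints q hq hqs)
    have h2 := (hints (qArgmax p l) (hq'meas l) (hq'simp l))
    rw [← integral_const_mul, ← integral_add h1.2.1 (h1.2.2.const_mul l),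
      ← integral_const_mul, ← integral_add h2.2.1 (h2.2.2.const_mul l)]
    exact integral_mono (h1.2.1.add (h1.2.2.const_mul l)) (h2.2.1.add (h2.2.2.const_mul l))
      fun ω => hpoint l q hqs (G ω)
  -- almost surely there are no ties at any fixed l
  have hties : ∀ l : ℝ, ∀ᵐ ω ∂μ, ∀ u v : V, u ≠ v →
      G ω u + l * Real.log (p u) ≠ G ω v + l * Real.log (p v) := by
    intro l
    rw [ae_all_iff]
    intro u
    rw [ae_all_iff]
    intro v
    by_cases huv : u = v
    · exact ae_of_all _ fun ω h => absurd huv h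
    · have hpairmeas : Measurable (fun ω => (G ω u, G ω v)) :=
        (hGmeas u).prodMk (hGmeas v)
      have hpair : Measure.map (fun ω => (G ω u, G ω v)) μ = ν.prod ν := by
        have h1 : (fun ω => (G ω u, G ω v)) = (fun g : V → ℝ => (g u, g v)) ∘ G := rfl
        rw [h1, ← Measure.map_map ((measurable_pi_apply u).prodMk (measurable_pi_apply v)) hG,
          hlaw, map_pair_pi_prob ν huv]
      rw [ae_iff]
      set t : ℝ := l * Real.log (p v) - l * Real.log (p u) with ht
      have hms : MeasurableSet {q : ℝ × ℝ | q.1 = q.2 + t} :=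
        measurableSet_eq_fun measurable_fst (measurable_snd.add_const t)
      have hsub : {ω | ¬(u ≠ v → G ω u + l * Real.log (p u) ≠ G ω v + l * Real.log (p v))}
          ⊆ (fun ω => (G ω u, G ω v)) ⁻¹' {q : ℝ × ℝ | q.1 = q.2 + t} := by
        intro ω hω
        simp only [Set.mem_setOf_eq, Classical.not_imp, not_not] at hω
        simp only [Set.mem_preimage, Set.mem_setOf_eq, ht]
        linarith [hω.2]
      refine measure_mono_null hsub ?_
      rw [← Measure.map_apply hpairmeas hms, hpair]
      exact prod_diag_null ν hatomless t
  -- the expected log-likelihood under q*, as a function of l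
  set Φ : ℝ → ℝ := fun l => ∫ ω, ∑ u, qArgmax p l (G ω) u * Real.log (p u) ∂μ with hΦ
  -- continuity of Φ
  have hΦcont : Continuous Φ := by
    rw [continuous_iff_continuousAt]
    intro l0
    refine tendsto_integral_filter_of_dominated_convergence
      (fun _ => ∑ u, |Real.log (p u)|) ?_ ?_ (integrable_const _) ?_
    · refine Filter.Eventually.of_forall fun l => ?_
      exact (Finset.measurable_sum _ fun u _ =>
        ((((measurable_pi_apply u).comp (hq'meas l)).comp hG).mul
          measurable_const)).aestronglyMeasurable
    · refine Filter.Eventually.of_forall fun l => ae_of_all _ fun ω => ?_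
      calc ‖∑ u, qArgmax p l (G ω) u * Real.log (p u)‖
          ≤ ∑ u, ‖qArgmax p l (G ω) u * Real.log (p u)‖ := norm_sum_le _ _
        _ ≤ ∑ u, |Real.log (p u)| := by
            refine Finset.sum_le_sum fun u _ => ?_
            rw [norm_mul, Real.norm_eq_abs, Real.norm_eq_abs,
              abs_of_nonneg ((hq'simp l (G ω)).1 u)]
            exact mul_le_of_le_one_left (abs_nonneg _) (hqle1 _ (hq'simp l (G ω)) u)
    · filter_upwards [hties l0] with ω hω
      set g : V → ℝ := G ω with hg
      set w : V := argmaxOf (fun v => g v + l0 * Real.log (p v)) with hw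
      have hstrict : ∀ v, v ≠ w → g v + l0 * Real.log (p v) < g w + l0 * Real.log (p w) :=
        fun v hv => lt_of_le_of_ne (argmaxOf_spec (fun v => g v + l0 * Real.log (p v)) v)
          (hω v w hv)
      have hev : ∀ᶠ l in nhds l0, argmaxOf (fun v => g v + l * Real.log (p v)) = w := by
        have h1 : ∀ᶠ l in nhds l0, ∀ v, v ≠ w →
            g v + l * Real.log (p v) < g w + l * Real.log (p w) := by
          rw [Filter.eventually_all]
          intro v
          by_cases hv : v = w
          · exact Filter.Eventually.of_forall fun l h => absurd hv h
          · have hcv : ContinuousAt (fun l : ℝ => g v + l * Real.log (p v)) l0 := by fun_prop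
            have hcw : ContinuousAt (fun l : ℝ => g w + l * Real.log (p w)) l0 := by fun_prop
            exact (hcv.eventually_lt hcw (hstrict v hv)).mono fun l h _ => h
        exact h1.mono fun l h => argmaxOf_eq_of_lt h
      have hconst : ∀ᶠ l in nhds l0,
          (∑ u, qArgmax p l g u * Real.log (p u))
            = ∑ u, qArgmax p l0 g u * Real.log (p u) := by
        filter_upwards [hev] with l hl
        unfold qArgmax
        rw [hl, ← hw]
      exact Filter.Tendsto.congr' (hconst.mono fun l h => h.symm) tendsto_const_nhds
  -- limit of Φ at infinity
  have hΦtop : Filter.Tendsto Φ Filter.atTop (nhds (Real.log (p (argmaxOf p)))) := by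
    have hconst : (∫ _ω, Real.log (p (argmaxOf p)) ∂μ) = Real.log (p (argmaxOf p)) := by simp
    rw [← hconst]
    simp only [hΦ]
    refine tendsto_integral_filter_of_dominated_convergence
      (μ := μ) (l := Filter.atTop)
      (F := fun l ω => ∑ u, qArgmax p l (G ω) u * Real.log (p u))
      (f := fun _ω => Real.log (p (argmaxOf p)))
      (fun _ => ∑ u, |Real.log (p u)|) ?_ ?_ (integrable_const _) ?_
    · refine Filter.Eventually.of_forall fun l => ?_
      exact (Finset.measurable_sum _ fun u _ =>
        ((((measurable_pi_apply u).comp (hq'meas l)).comp hG).mul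
          measurable_const)).aestronglyMeasurable
    · refine Filter.Eventually.of_forall fun l => ae_of_all _ fun ω => ?_
      calc ‖∑ u, qArgmax p l (G ω) u * Real.log (p u)‖
          ≤ ∑ u, ‖qArgmax p l (G ω) u * Real.log (p u)‖ := norm_sum_le _ _
        _ ≤ ∑ u, |Real.log (p u)| := by
            refine Finset.sum_le_sum fun u _ => ?_
            rw [norm_mul, Real.norm_eq_abs, Real.norm_eq_abs,
              abs_of_nonneg ((hq'simp l (G ω)).1 u)]
            exact mul_le_of_le_one_left (abs_nonneg _) (hqle1 _ (hq'simp l (G ω)) u)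
    · refine ae_of_all _ fun ω => ?_
      set g : V → ℝ := G ω with hg
      have h1 : ∀ᶠ l in Filter.atTop, ∀ v, p v < p (argmaxOf p) →
          g v + l * Real.log (p v) < g (argmaxOf p) + l * Real.log (p (argmaxOf p)) := by
        rw [Filter.eventually_all]
        intro v
        by_cases hv : p v < p (argmaxOf p)
        · have hlog : Real.log (p v) < Real.log (p (argmaxOf p)) :=
            Real.log_lt_log (hppos v) hv
          have htend : Filter.Tendsto (fun l : ℝ =>
              (g (argmaxOf p) + l * Real.log (p (argmaxOf p))) - (g v + l * Real.log (p v)))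
              Filter.atTop Filter.atTop := by
            have heq : (fun l : ℝ =>
                (g (argmaxOf p) + l * Real.log (p (argmaxOf p))) - (g v + l * Real.log (p v)))
                = fun l => l * (Real.log (p (argmaxOf p)) - Real.log (p v))
                  + (g (argmaxOf p) - g v) := by funext l; ring
            rw [heq]
            exact Filter.tendsto_atTop_add_const_right _ _
              (Filter.Tendsto.atTop_mul_const (by linarith) Filter.tendsto_id)
          exact (htend.eventually_gt_atTop 0).mono fun l h _ => by linarith
        · exact Filter.Eventually.of_forall fun l h => absurd h hv
      have hev : ∀ᶠ l in Filter.atTop,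
          (∑ u, qArgmax p l g u * Real.log (p u)) = Real.log (p (argmaxOf p)) := by
        filter_upwards [h1] with l hl
        have heq1 : (∑ u, qArgmax p l g u * Real.log (p u))
            = Real.log (p (argmaxOf (fun v => g v + l * Real.log (p v)))) := by
          rw [show (∑ u, qArgmax p l g u * Real.log (p u))
              = ∑ u, Real.log (p u) * qArgmax p l g u from
            Finset.sum_congr rfl fun u _ => mul_comm _ _]
          exact sum_mul_qArgmax p l g (fun u => Real.log (p u))
        rw [heq1]
        have hple : p (argmaxOf (fun v => g v + l * Real.log (p v))) ≤ p (argmaxOf p) :=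
          argmaxOf_spec p _
        have hnlt : ¬ p (argmaxOf (fun v => g v + l * Real.log (p v))) < p (argmaxOf p) := by
          intro hlt
          have h2 := hl _ hlt
          have h3 := argmaxOf_spec (fun v => g v + l * Real.log (p v)) (argmaxOf p)
          linarith
        rw [le_antisymm hple (not_lt.1 hnlt)]
      exact Filter.Tendsto.congr' (hev.mono fun l h => h.symm) tendsto_const_nhds
  -- the optimality glue
  have hopt : ∀ l : ℝ, 0 ≤ l → (l = 0 ∨ (∑ u, p u * Real.log (p u)) - Φ l = ε) →
      ∀ q : (V → ℝ) → V → ℝ, Measurable q → (∀ g, q g ∈ simplex V) →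
      (∑ u, (p u - ∫ ω, q (G ω) u ∂μ) * Real.log (p u)) ≤ ε →
      ∫ ω, ∑ u, G ω u * q (G ω) u ∂μ ≤ ∫ ω, ∑ u, G ω u * qArgmax p l (G ω) u ∂μ := by
    intro l hl hsat q hq hqs hfeas
    have h1 := hlag l q hq hqs
    have hΦl : Φ l = ∫ ω, ∑ u, qArgmax p l (G ω) u * Real.log (p u) ∂μ := by simp only [hΦ]
    rcases hsat with h0 | hsat
    · subst h0; simpa using h1
    · rw [hbridge q hq hqs] at hfeas
      have hJ : Φ l ≤ ∫ ω, ∑ u, q (G ω) u * Real.log (p u) ∂μ := by linarith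
      rw [hΦl] at hJ
      have h2 := mul_le_mul_of_nonneg_left hJ hl
      linarith
  -- pick the multiplier
  by_cases h0 : (∑ u, p u * Real.log (p u)) - Φ 0 ≤ ε
  · refine ⟨0, le_refl 0, hq'meas 0, hq'simp 0, ?_, ?_, Or.inr rfl⟩
    · rw [hbridge _ (hq'meas 0) (hq'simp 0)]
      have hΦl : Φ 0 = ∫ ω, ∑ u, qArgmax p 0 (G ω) u * Real.log (p u) ∂μ := by simp only [hΦ]
      linarith
    · exact fun q hq hqs hfeas => hopt 0 le_rfl (Or.inl rfl) q hq hqs hfeas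
  · push_neg at h0
    have hgap : ∃ u0, Real.log (p u0) < Real.log (p (argmaxOf p)) := by
      by_contra hcon
      push_neg at hcon
      have hconst : ∀ u, Real.log (p u) = Real.log (p (argmaxOf p)) := fun u =>
        le_antisymm (Real.log_le_log (hppos u) (argmaxOf_spec p u)) (hcon u)
      have hΦ0 : Φ 0 = Real.log (p (argmaxOf p)) := by
        simp only [hΦ]
        have hptw : ∀ ω : Ω, (∑ u, qArgmax p 0 (G ω) u * Real.log (p u))
            = Real.log (p (argmaxOf p)) := by
          intro ω
          calc ∑ u, qArgmax p 0 (G ω) u * Real.log (p u)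
              = ∑ u, qArgmax p 0 (G ω) u * Real.log (p (argmaxOf p)) :=
                Finset.sum_congr rfl fun u _ => by rw [hconst u]
            _ = Real.log (p (argmaxOf p)) := by
                rw [← Finset.sum_mul, (hq'simp 0 (G ω)).2, one_mul]
        simp only [hptw]
        simp
      have hD0 : (∑ u, p u * Real.log (p u)) = Real.log (p (argmaxOf p)) := by
        calc ∑ u, p u * Real.log (p u) = ∑ u, p u * Real.log (p (argmaxOf p)) :=
              Finset.sum_congr rfl fun u _ => by rw [hconst u]
          _ = Real.log (p (argmaxOf p)) := by rw [← Finset.sum_mul, hp.2, one_mul]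
      rw [hD0, hΦ0, sub_self] at h0
      linarith
    obtain ⟨u0, hu0⟩ := hgap
    have hDlt : (∑ u, p u * Real.log (p u)) < Real.log (p (argmaxOf p)) := by
      have hlt : ∑ u, p u * Real.log (p u) < ∑ u, p u * Real.log (p (argmaxOf p)) := by
        refine Finset.sum_lt_sum (fun u _ => mul_le_mul_of_nonneg_left
          (Real.log_le_log (hppos u) (argmaxOf_spec p u)) (hppos u).le)
          ⟨u0, Finset.mem_univ u0, mul_lt_mul_of_pos_left hu0 (hppos u0)⟩
      calc ∑ u, p u * Real.log (p u) < ∑ u, p u * Real.log (p (argmaxOf p)) := hlt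
        _ = Real.log (p (argmaxOf p)) := by rw [← Finset.sum_mul, hp.2, one_mul]
    have hevent : ∀ᶠ l in Filter.atTop,
        (∑ u, p u * Real.log (p u)) - Φ l < ε := by
      have htend : Filter.Tendsto (fun l => (∑ u, p u * Real.log (p u)) - Φ l) Filter.atTop
          (nhds ((∑ u, p u * Real.log (p u)) - Real.log (p (argmaxOf p)))) :=
        tendsto_const_nhds.sub hΦtop
      exact htend.eventually_lt_const (by linarith)
    obtain ⟨N, hN, hN0⟩ := (hevent.and (Filter.eventually_ge_atTop 0)).exists
    have hivt := intermediate_value_Icc' (f := fun l => (∑ u, p u * Real.log (p u)) - Φ l) hN0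
      ((continuous_const.sub hΦcont).continuousOn (s := Set.Icc 0 N))
    have hmem : ε ∈ Set.Icc ((∑ u, p u * Real.log (p u)) - Φ N)
        ((∑ u, p u * Real.log (p u)) - Φ 0) := ⟨hN.le, h0.le⟩
    obtain ⟨l, hlmem, hlval⟩ := hivt hmem
    have hΦl : Φ l = ∫ ω, ∑ u, qArgmax p l (G ω) u * Real.log (p u) ∂μ := by simp only [hΦ]
    simp only at hlval
    refine ⟨l, hlmem.1, hq'meas l, hq'simp l, ?_, ?_, Or.inl ?_⟩
    · rw [hbridge _ (hq'meas l) (hq'simp l)]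
      linarith
    · exact fun q hq hqs hfeas => hopt l hlmem.1 (Or.inr hlval) q hq hqs hfeas
    · rw [hbridge _ (hq'meas l) (hq'simp l)]
      linarith
end
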